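/- arXiv:0807.1036 — 4 statements merged into one kernel-verified Lean document; each statement's English description precedes it below -/
import Mathlib

section
/- Let (Ω, ℱ, ℙ) be a probability space, T > 0, and ω ↦ M_ω a measurable family of finite atomless Borel measures on [0,T] (a measure-valued kernel). Let q ∈ (0,1], s > 0 and C > 0 be such that ∫_Ω M_ω([x,y])^q ℙ(dω) ≤ C (y−x)^s for all 0 ≤ x ≤ y ≤ T. If K ⊆ [0,T] has Euclidean Hausdorff dimension strictly less than s, then ℙ-almost surely the Hausdorff dimension of K with respect to the pseudometric d_ω(x,y) = M_ω([min(x,y), max(x,y)]) is at most q. -/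
open MeasureTheory Filter
open scoped ENNReal Topology

/-- The `t`-dimensional Hausdorff content of `K` with respect to a pseudometric `d`:
the infimum of `∑ᵢ rᵢ^t` over countable covers of `K` by `d`-balls of radii `rᵢ > 0`. -/
noncomputable def hContentWith {X : Type*} (d : X → X → ℝ) (t : ℝ) (K : Set X) : ℝ≥0∞ :=
  ⨅ (c : ℕ → X) (r : ℕ → ℝ)
    (_ : (∀ n, 0 < r n) ∧ K ⊆ ⋃ n, {y | d (c n) y < r n}),
    ∑' n, ENNReal.ofReal (r n ^ t)

/-- The Hausdorff dimension of `K` with respect to a pseudometric `d`: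
`inf {t ≥ 0 : C^t(K) = 0}`. -/
noncomputable def dimWith {X : Type*} (d : X → X → ℝ) (K : Set X) : ℝ :=
  sInf {t : ℝ | 0 ≤ t ∧ hContentWith d t K = 0}

lemma cover_lemma {T s : ℝ} (hT : 0 ≤ T) (hs : 0 < s) {K : Set ℝ} (hK : K ⊆ Set.Icc 0 T)
    (hdim : dimH K < ENNReal.ofReal s) (ε : ℝ≥0∞) (hε : 0 < ε) :
    ∃ x y : ℕ → ℝ, (∀ n, 0 ≤ x n ∧ x n ≤ y n ∧ y n ≤ T) ∧
      K ⊆ ⋃ n, Set.Icc (x n) (y n) ∧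
      ∑' n, ENNReal.ofReal (y n - x n) ^ s ≤ (2 : ℝ≥0∞) ^ s * ε := by
  classical
  have hμ : μH[s] K = 0 := by
    have h := hausdorffMeasure_of_dimH_lt (s := K) (d := s.toNNReal)
      (by rwa [ENNReal.ofReal] at hdim)
    rwa [Real.coe_toNNReal _ hs.le] at h
  have happ := MeasureTheory.Measure.hausdorffMeasure_apply s K
  rw [hμ] at happ
  have h0 : ∀ r : ℝ≥0∞, 0 < r →
      (⨅ (t : ℕ → Set ℝ) (_ : K ⊆ ⋃ n, t n) (_ : ∀ n, EMetric.diam (t n) ≤ r),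
        ∑' n, ⨆ _ : (t n).Nonempty, EMetric.diam (t n) ^ s) = 0 := by
    intro r hr
    have := (ENNReal.iSup_eq_zero).1 happ.symm r
    exact (ENNReal.iSup_eq_zero).1 this hr
  have hlt : (⨅ (t : ℕ → Set ℝ) (_ : K ⊆ ⋃ n, t n) (_ : ∀ n, EMetric.diam (t n) ≤ 1),
      ∑' n, ⨆ _ : (t n).Nonempty, EMetric.diam (t n) ^ s) < ε := by
    rw [h0 1 one_pos]; exact hε
  simp only [iInf_lt_iff] at hlt
  obtain ⟨t, hcov, hdiam, hsum⟩ := hlt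
  set D : ℕ → ℝ := fun n => (EMetric.diam (t n)).toReal with hD
  have hDtop : ∀ n, EMetric.diam (t n) ≠ ⊤ := fun n => ((hdiam n).trans_lt ENNReal.one_lt_top).ne
  have hD0 : ∀ n, 0 ≤ D n := fun n => ENNReal.toReal_nonneg
  set x : ℕ → ℝ := fun n =>
    if h : (t n ∩ Set.Icc 0 T).Nonempty then max 0 (h.choose - D n) else 0 with hx
  set y : ℕ → ℝ := fun n =>
    if h : (t n ∩ Set.Icc 0 T).Nonempty then min T (h.choose + D n) else 0 with hy
  refine ⟨x, y, ?_, ?_, ?_⟩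
  · intro n
    by_cases h : (t n ∩ Set.Icc 0 T).Nonempty
    · have ha := h.choose_spec
      have ha2 : h.choose ∈ Set.Icc 0 T := ha.2
      simp only [hx, hy, dif_pos h]
      refine ⟨le_max_left _ _, ?_, min_le_left _ _⟩
      refine max_le (le_min hT (add_nonneg ha2.1 (hD0 n))) (le_min ?_ (by linarith [hD0 n]))
      linarith [ha2.2, hD0 n]
    · simp [hx, hy, dif_neg h, hT]
  · intro z hz
    obtain ⟨n, hn⟩ := Set.mem_iUnion.1 (hcov hz)
    have hzT := hK hz
    have h : (t n ∩ Set.Icc 0 T).Nonempty := ⟨z, hn, hzT⟩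
    have ha := h.choose_spec
    have hdist : dist z h.choose ≤ D n := by
      have h1 : edist z h.choose ≤ EMetric.diam (t n) :=
        EMetric.edist_le_diam_of_mem hn ha.1
      have h2 := ENNReal.toReal_mono (hDtop n) h1
      rwa [edist_dist, ENNReal.toReal_ofReal dist_nonneg] at h2
    rw [Real.dist_eq, abs_sub_le_iff] at hdist
    refine Set.mem_iUnion.2 ⟨n, ?_⟩
    simp only [hx, hy, dif_pos h, Set.mem_Icc]
    constructor
    · exact max_le hzT.1 (by linarith [hdist.2])
    · exact le_min hzT.2 (by linarith [hdist.1])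
  · calc ∑' n, ENNReal.ofReal (y n - x n) ^ s
        ≤ ∑' n, (2 : ℝ≥0∞) ^ s * ⨆ _ : (t n).Nonempty, EMetric.diam (t n) ^ s := by
          refine ENNReal.tsum_le_tsum fun n => ?_
          by_cases h : (t n ∩ Set.Icc 0 T).Nonempty
          · have ha := h.choose_spec
            have hne : (t n).Nonempty := ⟨h.choose, ha.1⟩
            rw [ciSup_pos hne]
            have hyx : y n - x n ≤ 2 * D n := by
              simp only [hx, hy, dif_pos h]
              have h1 : min T (h.choose + D n) ≤ h.choose + D n := min_le_right _ _
              have h2 : h.choose - D n ≤ max 0 (h.choose - D n) := le_max_right _ _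
              linarith
            have h3 : ENNReal.ofReal (y n - x n) ≤ 2 * EMetric.diam (t n) := by
              calc ENNReal.ofReal (y n - x n) ≤ ENNReal.ofReal (2 * D n) :=
                    ENNReal.ofReal_le_ofReal hyx
                _ = 2 * ENNReal.ofReal (D n) := by
                    rw [ENNReal.ofReal_mul (by norm_num)]; norm_num
                _ = 2 * EMetric.diam (t n) := by rw [ENNReal.ofReal_toReal (hDtop n)]
            calc ENNReal.ofReal (y n - x n) ^ s ≤ (2 * EMetric.diam (t n)) ^ s :=
                  ENNReal.rpow_le_rpow h3 hs.le
              _ = (2:ℝ≥0∞) ^ s * EMetric.diam (t n) ^ s :=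
                  ENNReal.mul_rpow_of_nonneg _ _ hs.le
          · simp only [hx, hy, dif_neg h, sub_zero, ENNReal.ofReal_zero]
            rw [ENNReal.zero_rpow_of_pos hs]
            exact zero_le'
      _ = (2 : ℝ≥0∞) ^ s * ∑' n, ⨆ _ : (t n).Nonempty, EMetric.diam (t n) ^ s :=
          ENNReal.tsum_mul_left
      _ ≤ (2 : ℝ≥0∞) ^ s * ε := mul_le_mul_right hsum.le _

lemma content_le (μ : Measure ℝ) (hfin : μ Set.univ < ⊤) {q : ℝ} (hq0 : 0 < q) (hq1 : q ≤ 1)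
    {K : Set ℝ} (x y : ℕ → ℝ)
    (hcov : K ⊆ ⋃ n, Set.Icc (x n) (y n)) (η : ℕ → ℝ) (hη : ∀ n, 0 < η n) :
    hContentWith (fun a b => (μ (Set.Icc (min a b) (max a b))).toReal) q K ≤
      ∑' n, (μ (Set.Icc (x n) (y n))) ^ q + ∑' n, ENNReal.ofReal (η n ^ q) := by
  set r : ℕ → ℝ := fun n => (μ (Set.Icc (x n) (y n))).toReal + η n with hr
  have hfin' : ∀ A : Set ℝ, μ A ≠ ⊤ :=
    fun A => ((measure_mono (Set.subset_univ A)).trans_lt hfin).ne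
  have hball : K ⊆ ⋃ n, {z : ℝ | (fun a b => (μ (Set.Icc (min a b) (max a b))).toReal) (x n) z < r n} := by
    intro z hz
    obtain ⟨n, hn⟩ := Set.mem_iUnion.1 (hcov hz)
    refine Set.mem_iUnion.2 ⟨n, ?_⟩
    have h1 : min (x n) z = x n := min_eq_left hn.1
    have h2 : max (x n) z = z := max_eq_right hn.1
    simp only [Set.mem_setOf_eq, h1, h2]
    calc (μ (Set.Icc (x n) z)).toReal ≤ (μ (Set.Icc (x n) (y n))).toReal :=
        ENNReal.toReal_mono (hfin' _) (measure_mono (Set.Icc_subset_Icc_right hn.2))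
      _ < r n := lt_add_of_pos_right _ (hη n)
  have hle : hContentWith (fun a b => (μ (Set.Icc (min a b) (max a b))).toReal) q K ≤
      ∑' n, ENNReal.ofReal (r n ^ q) := by
    unfold hContentWith
    exact iInf_le_of_le x (iInf_le_of_le r (iInf_le_of_le
      ⟨fun n => add_pos_of_nonneg_of_pos ENNReal.toReal_nonneg (hη n), hball⟩ le_rfl))
  refine hle.trans ?_
  rw [← ENNReal.tsum_add]
  refine ENNReal.tsum_le_tsum fun n => ?_
  have hm : (0:ℝ) ≤ (μ (Set.Icc (x n) (y n))).toReal := ENNReal.toReal_nonneg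
  calc ENNReal.ofReal (r n ^ q) = (ENNReal.ofReal (r n)) ^ q :=
        (ENNReal.ofReal_rpow_of_nonneg (add_nonneg hm (hη n).le) hq0.le).symm
    _ = (ENNReal.ofReal (μ (Set.Icc (x n) (y n))).toReal + ENNReal.ofReal (η n)) ^ q := by
        rw [hr, ENNReal.ofReal_add hm (hη n).le]
    _ ≤ (ENNReal.ofReal (μ (Set.Icc (x n) (y n))).toReal) ^ q + (ENNReal.ofReal (η n)) ^ q :=
        ENNReal.rpow_add_le_add_rpow _ _ hq0.le hq1
    _ = (μ (Set.Icc (x n) (y n))) ^ q + ENNReal.ofReal (η n ^ q) := by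
        rw [ENNReal.ofReal_toReal (hfin' _), ENNReal.ofReal_rpow_of_nonneg (hη n).le hq0.le]

/-- **Upper bound on the Hausdorff dimension in the random metric.**
Let `ω ↦ M ω` be a measurable family of finite atomless Borel measures on `[0,T]` on a
probability space `(Ω, ℙ)`, and suppose `E[M([x,y])^q] ≤ C (y-x)^s` for all
`0 ≤ x ≤ y ≤ T`, where `q ∈ (0,1]`, `s > 0`, `C > 0`. If `K ⊆ [0,T]` has Euclidean
Hausdorff dimension `< s`, then `ℙ`-a.s. the Hausdorff dimension of `K` with respect to
the pseudometric `d_ω(x,y) = M_ω([min(x,y), max(x,y)])` is at most `q`. -/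
theorem dim_random_metric_le
    {Ω : Type*} [MeasurableSpace Ω] (ℙ : Measure Ω) [IsProbabilityMeasure ℙ]
    (T : ℝ) (hT : 0 < T)
    (M : Ω → Measure ℝ)
    (hfin : ∀ ω, M ω Set.univ < ⊤)
    (hsupp : ∀ ω, M ω (Set.Icc 0 T)ᶜ = 0)
    (hatom : ∀ ω, ∀ x : ℝ, M ω {x} = 0)
    (hmeas : ∀ A : Set ℝ, MeasurableSet A → Measurable fun ω => M ω A)
    (q s C : ℝ) (hq : q ∈ Set.Ioc (0 : ℝ) 1) (hs : 0 < s) (hC : 0 < C)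
    (hmom : ∀ x y : ℝ, 0 ≤ x → x ≤ y → y ≤ T →
      ∫⁻ ω, (M ω (Set.Icc x y)) ^ q ∂ℙ ≤ ENNReal.ofReal (C * (y - x) ^ s))
    (K : Set ℝ) (hK : K ⊆ Set.Icc 0 T) (hdim : dimH K < ENNReal.ofReal s) :
    ∀ᵐ ω ∂ℙ,
      dimWith (fun x y => (M ω (Set.Icc (min x y) (max x y))).toReal) K ≤ q := by
  obtain ⟨hq0, hq1⟩ := hq
  set c2 : ℝ≥0∞ := ENNReal.ofReal C * (2:ℝ≥0∞) ^ s with hc2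
  have h2s_ne_top : ((2:ℝ≥0∞) ^ s) ≠ ⊤ := ENNReal.rpow_ne_top_of_nonneg hs.le (by norm_num)
  have h2s_ne_zero : ((2:ℝ≥0∞) ^ s) ≠ 0 := (ENNReal.rpow_pos (by norm_num) (by norm_num)).ne'
  have hc2top : c2 ≠ ⊤ := ENNReal.mul_ne_top ENNReal.ofReal_ne_top h2s_ne_top
  have hc20 : c2 ≠ 0 :=
    mul_ne_zero (by simpa using (ENNReal.ofReal_pos.2 hC).ne') h2s_ne_zero
  have hcovk : ∀ k : ℕ, ∃ x y : ℕ → ℝ, (∀ n, 0 ≤ x n ∧ x n ≤ y n ∧ y n ≤ T) ∧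
      K ⊆ ⋃ n, Set.Icc (x n) (y n) ∧
      ∑' n, ENNReal.ofReal (C * (y n - x n) ^ s) ≤ (2:ℝ≥0∞)⁻¹ ^ k := by
    intro k
    have hεpos : 0 < ((2:ℝ≥0∞)⁻¹ ^ k) / c2 :=
      ENNReal.div_pos (pow_ne_zero _ (by norm_num)) hc2top
    obtain ⟨x, y, h1, h2, h3⟩ := cover_lemma hT.le hs hK hdim _ hεpos
    refine ⟨x, y, h1, h2, ?_⟩
    have heq : ∀ n, ENNReal.ofReal (C * (y n - x n) ^ s)
        = ENNReal.ofReal C * ENNReal.ofReal (y n - x n) ^ s := by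
      intro n
      rw [ENNReal.ofReal_mul hC.le,
        ENNReal.ofReal_rpow_of_nonneg (sub_nonneg.2 (h1 n).2.1) hs.le]
    calc ∑' n, ENNReal.ofReal (C * (y n - x n) ^ s)
        = ENNReal.ofReal C * ∑' n, ENNReal.ofReal (y n - x n) ^ s := by
          simp_rw [heq]; exact ENNReal.tsum_mul_left
      _ ≤ ENNReal.ofReal C * ((2:ℝ≥0∞) ^ s * (((2:ℝ≥0∞)⁻¹ ^ k) / c2)) :=
          mul_le_mul_right h3 _
      _ = c2 * (((2:ℝ≥0∞)⁻¹ ^ k) / c2) := by rw [hc2, mul_assoc]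
      _ = (2:ℝ≥0∞)⁻¹ ^ k := ENNReal.mul_div_cancel hc20 hc2top
  choose x y hxy hKcov hsum using hcovk
  set Y : ℕ → Ω → ℝ≥0∞ := fun k ω => ∑' n, (M ω (Set.Icc (x k n) (y k n))) ^ q with hY
  have hYmeas : ∀ k, Measurable (Y k) := fun k =>
    Measurable.ennreal_tsum fun n => (hmeas _ measurableSet_Icc).pow_const q
  have hYint : ∀ k, ∫⁻ ω, Y k ω ∂ℙ ≤ (2:ℝ≥0∞)⁻¹ ^ k := by
    intro k
    rw [hY]
    simp only
    rw [lintegral_tsum (fun n => ((hmeas _ measurableSet_Icc).pow_const q).aemeasurable)]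
    exact le_trans (ENNReal.tsum_le_tsum fun n =>
      hmom _ _ (hxy k n).1 (hxy k n).2.1 (hxy k n).2.2) (hsum k)
  have hg : ∀ᵐ ω ∂ℙ, ∑' k, Y k ω < ⊤ := by
    refine ae_lt_top (Measurable.ennreal_tsum hYmeas) ?_
    rw [lintegral_tsum fun k => (hYmeas k).aemeasurable]
    refine ne_top_of_le_ne_top ?_ (ENNReal.tsum_le_tsum hYint)
    rw [ENNReal.tsum_geometric]
    simp
  filter_upwards [hg] with ω hω
  have hcontent0 :
      hContentWith (fun a b => (M ω (Set.Icc (min a b) (max a b))).toReal) q K = 0 := by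
    have hbound : ∀ k : ℕ,
        hContentWith (fun a b => (M ω (Set.Icc (min a b) (max a b))).toReal) q K ≤
          Y k ω + ENNReal.ofReal ((2:ℝ)⁻¹ ^ k) * 2 := by
      intro k
      set η : ℕ → ℝ := fun n => ((2:ℝ)⁻¹ ^ k * (2:ℝ)⁻¹ ^ (n+1)) ^ (1/q) with hη
      have hηpos : ∀ n, 0 < η n := fun n =>
        Real.rpow_pos_of_pos (by positivity) _
      have hηq : ∀ n, η n ^ q = (2:ℝ)⁻¹ ^ k * (2:ℝ)⁻¹ ^ (n+1) := by
        intro n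
        show (((2:ℝ)⁻¹ ^ k * (2:ℝ)⁻¹ ^ (n+1)) ^ (1/q)) ^ q = _
        rw [← Real.rpow_mul (by positivity), one_div_mul_cancel hq0.ne', Real.rpow_one]
      have hhalf : ENNReal.ofReal ((2:ℝ)⁻¹) = (2:ℝ≥0∞)⁻¹ := by
        rw [ENNReal.ofReal_inv_of_pos (by norm_num)]; norm_num
      have hηsum : ∑' n, ENNReal.ofReal (η n ^ q) ≤ ENNReal.ofReal ((2:ℝ)⁻¹ ^ k) * 2 := by
        simp only [hηq]
        calc ∑' n, ENNReal.ofReal ((2:ℝ)⁻¹ ^ k * (2:ℝ)⁻¹ ^ (n+1))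
            = ENNReal.ofReal ((2:ℝ)⁻¹ ^ k) * ∑' n, ENNReal.ofReal ((2:ℝ)⁻¹ ^ (n+1)) := by
              simp_rw [ENNReal.ofReal_mul (by positivity : (0:ℝ) ≤ (2:ℝ)⁻¹ ^ k)]
              exact ENNReal.tsum_mul_left
          _ ≤ ENNReal.ofReal ((2:ℝ)⁻¹ ^ k) * 2 := by
              refine mul_le_mul_right ?_ _
              have hconv : ∀ m : ℕ, ENNReal.ofReal ((2:ℝ)⁻¹ ^ m) = (2:ℝ≥0∞)⁻¹ ^ m := by
                intro m; rw [ENNReal.ofReal_pow (by norm_num), hhalf]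
              calc ∑' n, ENNReal.ofReal ((2:ℝ)⁻¹ ^ (n+1))
                  ≤ ∑' n : ℕ, (2:ℝ≥0∞)⁻¹ ^ n := by
                    refine ENNReal.tsum_le_tsum fun n => ?_
                    rw [hconv (n+1)]
                    exact pow_le_pow_of_le_one (zero_le') (by norm_num) (Nat.le_succ n)
                _ = ((1:ℝ≥0∞) - 2⁻¹)⁻¹ := ENNReal.tsum_geometric _
                _ ≤ 2 := by norm_num [ENNReal.one_sub_inv_two]
      calc hContentWith (fun a b => (M ω (Set.Icc (min a b) (max a b))).toReal) q K
          ≤ Y k ω + ∑' n, ENNReal.ofReal (η n ^ q) :=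
            content_le (M ω) (hfin ω) hq0 hq1 (x k) (y k) (hKcov k) η hηpos
        _ ≤ Y k ω + ENNReal.ofReal ((2:ℝ)⁻¹ ^ k) * 2 := add_le_add_right hηsum _
    have h1 : Tendsto (fun k => Y k ω) atTop (𝓝 0) :=
      ENNReal.tendsto_atTop_zero_of_tsum_ne_top hω.ne
    have h2 : Tendsto (fun k : ℕ => ENNReal.ofReal ((2:ℝ)⁻¹ ^ k) * 2) atTop (𝓝 0) := by
      have h3 : Tendsto (fun k : ℕ => ((2:ℝ)⁻¹) ^ k) atTop (𝓝 0) :=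
        tendsto_pow_atTop_nhds_zero_of_lt_one (by norm_num) (by norm_num)
      have h4 := ENNReal.tendsto_ofReal h3
      rw [ENNReal.ofReal_zero] at h4
      have h5 := ENNReal.Tendsto.mul_const h4 (Or.inr (by norm_num : (2:ℝ≥0∞) ≠ ⊤))
      simpa using h5
    have htend : Tendsto (fun k => Y k ω + ENNReal.ofReal ((2:ℝ)⁻¹ ^ k) * 2) atTop (𝓝 0) := by
      simpa using h1.add h2
    exact le_antisymm (ge_of_tendsto' htend hbound) (zero_le')
  have hqmem : q ∈ {t : ℝ | 0 ≤ t ∧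
      hContentWith (fun a b => (M ω (Set.Icc (min a b) (max a b))).toReal) t K = 0} :=
    ⟨hq0.le, hcontent0⟩
  exact csInf_le ⟨0, fun t ht => ht.1⟩ hqmem
end

section
/- Let (Ω, ℱ, ℙ) be a probability space, T > 0, and ω ↦ M_ω a measurable family of finite atomless Borel measures on [0,T]. Let ψ : ℝ → ℝ be convex with ψ(0) = 0, ψ(1) = 0, set ζ(q) = q − ψ(q), and assume ζ(1+ε) > 1 for some ε > 0. Assume that for every q ∈ [0,1] there is a constant C_q > 0 with ∫_Ω M_ω([x,y])^q ℙ(dω) ≤ C_q (y−x)^{ζ(q)} for all 0 ≤ x ≤ y ≤ T. Then for every set K ⊆ [0,T], ℙ-almost surely ζ(dim_H^{d_ω}(K)) ≤ dim_H(K), where dim_H(K) is the Euclidean Hausdorff dimension of K and dim_H^{d_ω}(K) is the Hausdorff dimension of K with respect to the pseudometric d_ω(x,y) = M_ω([min(x,y), max(x,y)]). -/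
open MeasureTheory
open scoped ENNReal

lemma hContentWith_le {X : Type*} {d : X → X → ℝ} {t : ℝ} {K : Set X}
    (c : ℕ → X) (r : ℕ → ℝ) (hr : ∀ n, 0 < r n)
    (hcov : K ⊆ ⋃ n, {y | d (c n) y < r n}) :
    hContentWith d t K ≤ ∑' n, ENNReal.ofReal (r n ^ t) :=
  iInf_le_of_le c (iInf_le_of_le r (iInf_le _ ⟨hr, hcov⟩))

lemma dimWith_nonneg {X : Type*} (d : X → X → ℝ) (K : Set X) : 0 ≤ dimWith d K :=
  Real.sInf_nonneg (fun _ hx => hx.1)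

lemma dimWith_le {X : Type*} {d : X → X → ℝ} {K : Set X} {q : ℝ} (hq : 0 ≤ q)
    (h : hContentWith d q K = 0) : dimWith d K ≤ q :=
  csInf_le ⟨0, fun _ hx => hx.1⟩ ⟨hq, h⟩

/-- slope bound: ζ is nondecreasing on `(-∞, 1]`. -/
lemma zeta_mono {ψ ζ : ℝ → ℝ} (hconv : ConvexOn ℝ Set.univ ψ) (hψ1 : ψ 1 = 0)
    (hζ : ∀ q, ζ q = q - ψ q) {ε : ℝ} (hε : 0 < ε) (hεζ : ζ (1 + ε) > 1)
    {a b : ℝ} (hab : a ≤ b) (hb : b ≤ 1) : ζ a ≤ ζ b := by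
  rcases eq_or_lt_of_le hab with rfl | hab
  · exact le_rfl
  · have hψε : ψ (1 + ε) < ε := by
      have := hζ (1 + ε); linarith [hεζ]
    have hslope1 : (ψ (1 + ε) - ψ 1) / ((1 + ε) - 1) ≤ 1 := by
      rw [hψ1]
      have h1 : (1 : ℝ) + ε - 1 = ε := by ring
      rw [h1, div_le_one hε]; linarith
    have key : (ψ b - ψ a) / (b - a) ≤ 1 := by
      rcases eq_or_lt_of_le hb with hb1 | hb1
      · have h2 : (ψ b - ψ a) / (b - a) ≤ (ψ (1 + ε) - ψ b) / ((1 + ε) - b) :=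
          hconv.slope_mono_adjacent (Set.mem_univ _) (Set.mem_univ _) hab (by linarith)
        refine h2.trans ?_
        rw [hb1]; exact hslope1
      · have h2 : (ψ b - ψ a) / (b - a) ≤ (ψ 1 - ψ b) / (1 - b) :=
          hconv.slope_mono_adjacent (Set.mem_univ _) (Set.mem_univ _) hab hb1
        have h3 : (ψ 1 - ψ b) / (1 - b) ≤ (ψ (1 + ε) - ψ 1) / ((1 + ε) - 1) :=
          hconv.slope_mono_adjacent (Set.mem_univ _) (Set.mem_univ _) hb1 (by linarith)
        exact h2.trans (h3.trans hslope1)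
    have hba : 0 < b - a := by linarith
    have : ψ b - ψ a ≤ b - a := by
      rw [div_le_one hba] at key; linarith
    rw [hζ a, hζ b]; linarith

open Set

section B
variable (μ : Measure ℝ) [IsFiniteMeasure μ] [NullSingletonClass μ]

lemma Gmono : Monotone (fun x => (μ (Iic x)).toReal) := fun a b hab =>
  ENNReal.toReal_mono (measure_ne_top μ _) (measure_mono (Iic_subset_Iic.2 hab))

lemma Gdiff {a b : ℝ} (hab : a ≤ b) :
    (μ (Iic b)).toReal - (μ (Iic a)).toReal = (μ (Ioc a b)).toReal := by
  have h : μ (Iic b) = μ (Iic a) + μ (Ioc a b) := by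
    rw [← Iic_union_Ioc_eq_Iic hab,
      measure_union (Iic_disjoint_Ioc le_rfl) measurableSet_Ioc]
  rw [h, ENNReal.toReal_add (measure_ne_top μ _) (measure_ne_top μ _)]
  ring

lemma GIcc {a b : ℝ} (hab : a ≤ b) :
    (μ (Icc a b)).toReal = (μ (Iic b)).toReal - (μ (Iic a)).toReal := by
  rw [Gdiff μ hab, ← measure_congr Ioc_ae_eq_Icc]

lemma Gcont : Continuous (fun x => (μ (Iic x)).toReal) := by
  rw [Metric.continuous_iff]
  intro b ε hε
  have h2 : ∀ᶠ δ in nhds (0:ℝ), μ (Icc (b - δ) (b + δ)) < ENNReal.ofReal ε :=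
    (tendsto_measure_Icc μ b).eventually_lt_const (ENNReal.ofReal_pos.2 hε)
  rw [Metric.eventually_nhds_iff] at h2
  obtain ⟨δ, hδ, hδ2⟩ := h2
  refine ⟨δ / 2, by linarith, fun a hab => ?_⟩
  have hmem : μ (Icc (b - δ/2) (b + δ/2)) < ENNReal.ofReal ε := by
    apply hδ2; rw [Real.dist_eq, sub_zero, abs_of_pos (by linarith)]; linarith
  have hsub : ∀ u v : ℝ, u ≤ v → b - δ/2 ≤ u → v ≤ b + δ/2 →
      (μ (Ioc u v)).toReal < ε := by
    intro u v huv h1 h2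
    have : μ (Ioc u v) ≤ μ (Icc (b - δ/2) (b + δ/2)) :=
      measure_mono (fun z hz => ⟨by linarith [hz.1], by linarith [hz.2]⟩)
    exact ENNReal.toReal_lt_of_lt_ofReal (lt_of_le_of_lt this hmem)
  rw [Real.dist_eq] at hab ⊢
  rcases le_total a b with hab2 | hab2
  · rw [abs_sub_comm, abs_of_nonneg (sub_nonneg.2 (Gmono μ hab2)), Gdiff μ hab2]
    exact hsub a b hab2 (by rw [abs_sub_comm] at hab; cases abs_lt.1 hab; linarith)
      (by linarith)
  · rw [abs_of_nonneg (sub_nonneg.2 (Gmono μ hab2)), Gdiff μ hab2]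
    cases abs_lt.1 hab
    exact hsub b a hab2 (by linarith) (by linarith)

end B

set_option maxHeartbeats 1000000 in
lemma hContentWith_zero_of_one_lt (μ : Measure ℝ) [IsFiniteMeasure μ] [NullSingletonClass μ]
    {T t : ℝ} (hT : 0 ≤ T) (ht : 1 < t) {K : Set ℝ} (hK : K ⊆ Icc 0 T) :
    hContentWith (fun x y => (μ (Icc (min x y) (max x y))).toReal) t K = 0 := by
  set G := fun x => (μ (Iic x)).toReal with hGdef
  set Δ := G T - G 0 with hΔdef
  have hΔ0 : 0 ≤ Δ := sub_nonneg.2 (Gmono μ hT)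
  have hGcont : Continuous G := Gcont μ
  have hGmono : Monotone G := Gmono μ
  have hd : ∀ u v : ℝ, (μ (Icc (min u v) (max u v))).toReal = |G v - G u| := by
    intro u v
    rcases le_total u v with h | h
    · rw [min_eq_left h, max_eq_right h, GIcc μ h,
        abs_of_nonneg (sub_nonneg.2 (Gmono μ h))]
    · rw [min_eq_right h, max_eq_left h, GIcc μ h, abs_sub_comm,
        abs_of_nonneg (sub_nonneg.2 (Gmono μ h))]
  set gsum := ∑' n : ℕ, ((1/2:ℝ)^t)^n with hgsumdef
  have hx0 : (0:ℝ) ≤ (1/2:ℝ)^t := Real.rpow_nonneg (by norm_num) _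
  have hx1 : ((1/2:ℝ))^t < 1 := Real.rpow_lt_one (by norm_num) (by norm_num) (by linarith)
  have hgsummable : Summable (fun n : ℕ => ((1/2:ℝ)^t)^n) :=
    summable_geometric_of_lt_one hx0 hx1
  have hgsum0 : 0 ≤ gsum := tsum_nonneg (fun n => by positivity)
  have key : ∀ N : ℕ, 0 < N → ∀ ε : ℝ, 0 < ε →
      hContentWith (fun x y => (μ (Icc (min x y) (max x y))).toReal) t K ≤
        ENNReal.ofReal ((N:ℝ) * (Δ/(2*(N:ℝ)) + ε)^t + ε^t * gsum) := by
    intro N hN ε hε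
    have hNR : (0:ℝ) < (N:ℝ) := Nat.cast_pos.2 hN
    -- choose centers
    have hcex : ∀ i : ℕ, ∃ c ∈ Icc 0 T,
        G c = G 0 + min ((2*(i:ℝ)+1)/(2*(N:ℝ))) 1 * Δ := by
      intro i
      apply intermediate_value_Icc hT hGcont.continuousOn
      rw [Set.mem_Icc]
      have hmin0 : 0 ≤ min ((2*(i:ℝ)+1)/(2*(N:ℝ))) 1 := le_min (by positivity) zero_le_one
      have hmin1 : min ((2*(i:ℝ)+1)/(2*(N:ℝ))) 1 ≤ 1 := min_le_right _ _
      constructor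
      · nlinarith
      · have : min ((2*(i:ℝ)+1)/(2*(N:ℝ))) 1 * Δ ≤ 1 * Δ :=
          mul_le_mul_of_nonneg_right hmin1 hΔ0
        have hGT : G T = G 0 + Δ := by rw [hΔdef]; ring
        rw [hGT]; linarith
    choose c hcmem hcval using hcex
    -- covering estimate
    have hcov : ∀ y ∈ K, ∃ n, n < N ∧
        (μ (Icc (min (c n) y) (max (c n) y))).toReal ≤ Δ/(2*(N:ℝ)) := by
      intro y hy
      obtain ⟨hy0, hyT⟩ := hK hy
      set u := G y - G 0 with hudef
      have hu0 : 0 ≤ u := sub_nonneg.2 (Gmono μ hy0)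
      have huΔ : u ≤ Δ := sub_le_sub_right (Gmono μ hyT) _
      have hexecs : ∃ i : ℕ, i < N ∧ (i:ℝ) * Δ / (N:ℝ) ≤ u ∧ u ≤ ((i:ℝ)+1) * Δ / (N:ℝ) := by
        rcases eq_or_lt_of_le hΔ0 with hΔeq | hΔpos
        · refine ⟨0, hN, ?_, ?_⟩
          · rw [← hΔeq]; simpa using le_antisymm (by linarith [huΔ, hΔeq.symm]) hu0 |>.ge
          · rw [← hΔeq]
            have hu00 : u = 0 := le_antisymm (by linarith) hu0
            rw [hu00]; positivity
        · set i0 := Nat.floor (u * (N:ℝ) / Δ) with hi0def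
          have hfl : (i0:ℝ) ≤ u * (N:ℝ) / Δ := Nat.floor_le (by positivity)
          rcases lt_or_ge i0 N with hi0 | hi0
          · refine ⟨i0, hi0, ?_, ?_⟩
            · rw [div_le_iff₀ hNR]
              calc (i0:ℝ) * Δ ≤ (u * (N:ℝ) / Δ) * Δ := by nlinarith
                _ = u * (N:ℝ) := by field_simp
            · have h2 : u * (N:ℝ) / Δ < (i0:ℝ) + 1 := Nat.lt_floor_add_one _
              rw [le_div_iff₀ hNR]
              have := (div_lt_iff₀ hΔpos).1 h2
              nlinarith
          · have hNle : (N:ℝ) ≤ u * (N:ℝ) / Δ := le_trans (Nat.cast_le.2 hi0) hfl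
            have hΔu : Δ ≤ u := by
              rw [le_div_iff₀ hΔpos] at hNle; nlinarith
            have huΔ' : u = Δ := le_antisymm huΔ hΔu
            refine ⟨N - 1, Nat.sub_lt hN one_pos, ?_, ?_⟩
            · have hcast : ((N - 1 : ℕ) : ℝ) = (N:ℝ) - 1 := by
                rw [Nat.cast_sub hN]; norm_num
              rw [hcast, huΔ', div_le_iff₀ hNR]
              nlinarith
            · have hcast : ((N - 1 : ℕ) : ℝ) = (N:ℝ) - 1 := by
                rw [Nat.cast_sub hN]; norm_num
              rw [hcast, huΔ', le_div_iff₀ hNR]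
              nlinarith
      obtain ⟨i, hiN, hil, hiu⟩ := hexecs
      refine ⟨i, hiN, ?_⟩
      rw [hd]
      have hmineq : min ((2*(i:ℝ)+1)/(2*(N:ℝ))) 1 = (2*(i:ℝ)+1)/(2*(N:ℝ)) := by
        apply min_eq_left
        rw [div_le_one (by positivity)]
        have : (i:ℝ) + 1 ≤ (N:ℝ) := by exact_mod_cast Nat.succ_le_of_lt hiN
        linarith
      rw [hcval i, hmineq]
      have e1 : (2*(i:ℝ)+1)/(2*(N:ℝ)) * Δ = (i:ℝ)*Δ/(N:ℝ) + Δ/(2*(N:ℝ)) := by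
        field_simp
      have e2 : ((i:ℝ)+1)*Δ/(N:ℝ) = (i:ℝ)*Δ/(N:ℝ) + Δ/(N:ℝ) := by ring
      have e3 : Δ/(2*(N:ℝ)) + Δ/(2*(N:ℝ)) = Δ/(N:ℝ) := by ring
      have : G y - (G 0 + (2*(i:ℝ)+1)/(2*(N:ℝ)) * Δ) = u - ((2*(i:ℝ)+1)/(2*(N:ℝ)) * Δ) := by
        rw [hudef]; ring
      rw [this, abs_le]
      constructor <;> [linarith [e1, e2, e3]; linarith [e1, e2, e3]]
    -- build a ball cover
    set r : ℕ → ℝ := fun n => if n < N then Δ/(2*(N:ℝ)) + ε * (1/2)^n else ε * (1/2)^n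
      with hrdef
    have hrpos : ∀ n, 0 < r n := by
      intro n; rw [hrdef]; dsimp only; split
      · have : (0:ℝ) < ε * (1/2)^n := by positivity
        have h1 : 0 ≤ Δ/(2*(N:ℝ)) := by positivity
        linarith
      · positivity
    have hcov2 : K ⊆ ⋃ n, {y | (fun x y => (μ (Icc (min x y) (max x y))).toReal) (c n) y < r n} := by
      intro y hy
      obtain ⟨n, hnN, hle⟩ := hcov y hy
      refine Set.mem_iUnion.2 ⟨n, ?_⟩
      show (μ (Icc (min (c n) y) (max (c n) y))).toReal < r n
      rw [hrdef]; dsimp only; rw [if_pos hnN]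
      have : (0:ℝ) < ε * (1/2)^n := by positivity
      linarith
    refine le_trans (hContentWith_le c r hrpos hcov2) ?_
    -- sum estimate
    have hterm : ∀ n, ENNReal.ofReal (r n ^ t) ≤
        (if n < N then ENNReal.ofReal ((Δ/(2*(N:ℝ)) + ε)^t) else 0)
          + ENNReal.ofReal ((ε^t) * ((1/2:ℝ)^t)^n) := by
      intro n
      have hpow : ((1/2:ℝ)^n : ℝ)^t = ((1/2:ℝ)^t)^n := by
        rw [← Real.rpow_natCast (1/2 : ℝ) n, ← Real.rpow_natCast ((1/2:ℝ)^t) n,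
          ← Real.rpow_mul (by norm_num), ← Real.rpow_mul (by norm_num), mul_comm]
      rw [hrdef]; dsimp only; split
      · rename_i hn
        refine le_trans ?_ (le_add_of_nonneg_right (zero_le))
        apply ENNReal.ofReal_le_ofReal
        apply Real.rpow_le_rpow (by positivity) ?_ (by linarith)
        have : ε * (1/2:ℝ)^n ≤ ε * 1 :=
          mul_le_mul_of_nonneg_left (by
            apply pow_le_one₀ <;> norm_num) hε.le
        linarith
      · rename_i hn
        rw [zero_add]
        exact le_of_eq (by rw [Real.mul_rpow hε.le (by positivity), hpow])
    have hsum1 : ∑' n, ENNReal.ofReal (r n ^ t) ≤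
        (∑' n, (if n < N then ENNReal.ofReal ((Δ/(2*(N:ℝ)) + ε)^t) else 0))
          + ∑' n, ENNReal.ofReal ((ε^t) * ((1/2:ℝ)^t)^n) := by
      rw [← ENNReal.tsum_add]
      exact ENNReal.tsum_le_tsum hterm
    have hif : (∑' n, (if n < N then ENNReal.ofReal ((Δ/(2*(N:ℝ)) + ε)^t) else 0))
        = ENNReal.ofReal ((N:ℝ) * (Δ/(2*(N:ℝ)) + ε)^t) := by
      rw [tsum_eq_sum (s := Finset.range N)
        (fun b hb => if_neg (fun hbN => hb (Finset.mem_range.2 hbN)))]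
      rw [Finset.sum_congr rfl (fun x hx => if_pos (Finset.mem_range.1 hx)),
        Finset.sum_const, Finset.card_range, nsmul_eq_mul,
        ← ENNReal.ofReal_natCast N, ← ENNReal.ofReal_mul (Nat.cast_nonneg N)]
    have hgeom : (∑' n, ENNReal.ofReal ((ε^t) * ((1/2:ℝ)^t)^n))
        = ENNReal.ofReal (ε^t * gsum) := by
      rw [← ENNReal.ofReal_tsum_of_nonneg (fun n => by positivity)
        (hgsummable.mul_left _)]
      congr 1
      rw [hgsumdef, tsum_mul_left]
    refine hsum1.trans ?_
    rw [hif, hgeom, ← ENNReal.ofReal_add (by positivity)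
      (mul_nonneg (Real.rpow_nonneg hε.le _) hgsum0)]
  -- conclude by letting N → ∞ with ε = 1/N
  have hA0 : (0:ℝ) ≤ Δ/2 + 1 := by linarith
  have hseq : Filter.Tendsto
      (fun N : ℕ => (Δ/2+1)^t * (N:ℝ)^(1-t) + gsum * (N:ℝ)^(-t))
      Filter.atTop (nhds 0) := by
    have h1 : Filter.Tendsto (fun x:ℝ => x^(-(t-1))) Filter.atTop (nhds (0:ℝ)) :=
      tendsto_rpow_neg_atTop (by linarith)
    have h2 : Filter.Tendsto (fun x:ℝ => x^(-t)) Filter.atTop (nhds (0:ℝ)) :=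
      tendsto_rpow_neg_atTop (by linarith)
    have h3 := ((h1.comp tendsto_natCast_atTop_atTop).const_mul ((Δ/2+1)^t)).add
      ((h2.comp tendsto_natCast_atTop_atTop).const_mul gsum)
    simpa [neg_sub, Function.comp] using h3
  have htend : Filter.Tendsto
      (fun N : ℕ => ENNReal.ofReal ((N:ℝ) * (Δ/(2*(N:ℝ)) + 1/(N:ℝ))^t + (1/(N:ℝ))^t * gsum))
      Filter.atTop (nhds 0) := by
    have h0 : Filter.Tendsto (fun N : ℕ =>
        ENNReal.ofReal ((Δ/2+1)^t * (N:ℝ)^(1-t) + gsum * (N:ℝ)^(-t)))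
        Filter.atTop (nhds 0) := by
      have := ENNReal.tendsto_ofReal hseq
      simpa using this
    refine Filter.Tendsto.congr' ?_ h0
    filter_upwards [Filter.eventually_ge_atTop 1] with N hN1
    have hNR : (0:ℝ) < (N:ℝ) := by exact_mod_cast Nat.cast_pos.2 hN1
    congr 1
    have e1 : Δ/(2*(N:ℝ)) + 1/(N:ℝ) = (Δ/2+1)/(N:ℝ) := by field_simp
    have e2 : ((Δ/2+1)/(N:ℝ))^t = (Δ/2+1)^t * ((N:ℝ))^(-t) := by
      rw [Real.div_rpow hA0 hNR.le, Real.rpow_neg hNR.le, div_eq_mul_inv]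
    have e3 : ((1:ℝ)/(N:ℝ))^t = ((N:ℝ))^(-t) := by
      rw [one_div, Real.inv_rpow hNR.le, Real.rpow_neg hNR.le]
    have e4 : (N:ℝ) * ((N:ℝ))^(-t) = (N:ℝ)^(1-t) := by
      rw [sub_eq_add_neg, Real.rpow_add hNR, Real.rpow_one]
    rw [e1, e2, e3]
    calc (Δ/2+1)^t * (N:ℝ)^(1-t) + gsum * (N:ℝ)^(-t)
        = (Δ/2+1)^t * ((N:ℝ) * (N:ℝ)^(-t)) + gsum * (N:ℝ)^(-t) := by rw [e4]
      _ = (N:ℝ) * ((Δ/2+1)^t * (N:ℝ)^(-t)) + (N:ℝ)^(-t) * gsum := by ring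
  refine le_antisymm ?_ zero_le
  refine ge_of_tendsto htend ?_
  filter_upwards [Filter.eventually_ge_atTop 1] with N hN1
  exact key N hN1 (1/(N:ℝ)) (one_div_pos.2 (by exact_mod_cast Nat.cast_pos.2 hN1))


lemma exists_cover_of_hausdorff_zero {s : ℝ} {K : Set ℝ} (hH : μH[s] K = 0)
    (δ : ℝ≥0∞) (hδ : 0 < δ) :
    ∃ U : ℕ → Set ℝ, (K ⊆ ⋃ n, U n) ∧ (∀ n, EMetric.diam (U n) ≤ 1) ∧
      ∑' n, ⨆ _ : (U n).Nonempty, EMetric.diam (U n) ^ s < δ := by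
  have h1 : (⨅ (U : ℕ → Set ℝ) (_ : K ⊆ ⋃ n, U n) (_ : ∀ n, EMetric.diam (U n) ≤ 1),
      ∑' n, ⨆ _ : (U n).Nonempty, EMetric.diam (U n) ^ s) = 0 := by
    refine le_antisymm ?_ zero_le
    rw [← hH, Measure.hausdorffMeasure_apply]
    exact le_iSup₂ (f := fun (r : ℝ≥0∞) (_ : 0 < r) =>
      ⨅ (U : ℕ → Set ℝ) (_ : K ⊆ ⋃ n, U n) (_ : ∀ n, EMetric.diam (U n) ≤ r),
        ∑' n, ⨆ _ : (U n).Nonempty, EMetric.diam (U n) ^ s) 1 zero_lt_one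
  have h2 : (⨅ (U : ℕ → Set ℝ) (_ : K ⊆ ⋃ n, U n) (_ : ∀ n, EMetric.diam (U n) ≤ 1),
      ∑' n, ⨆ _ : (U n).Nonempty, EMetric.diam (U n) ^ s) < δ := h1 ▸ hδ
  simp only [iInf_lt_iff] at h2
  obtain ⟨U, hcov, hdiam, hlt⟩ := h2
  exact ⟨U, hcov, hdiam, hlt⟩

lemma intervals_of_cover {T s : ℝ} (hT : 0 ≤ T) (hs : 0 < s) {K : Set ℝ}
    (hK : K ⊆ Icc 0 T) (U : ℕ → Set ℝ) (hcov : K ⊆ ⋃ n, U n)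
    (hdiam : ∀ n, EMetric.diam (U n) ≤ 1) :
    ∃ a b : ℕ → ℝ,
      (∀ n, 0 ≤ a n ∧ a n ≤ b n ∧ b n ≤ T) ∧
      (∀ y ∈ K, ∃ n, a n ≤ y ∧ y ≤ b n) ∧
      (∀ n, ENNReal.ofReal (b n - a n) ^ s ≤
        ⨆ _ : (U n).Nonempty, EMetric.diam (U n) ^ s) := by
  classical
  set V : ℕ → Set ℝ := fun n => U n ∩ Icc 0 T with hV
  have hVsub : ∀ n, V n ⊆ Icc 0 T := fun n => inter_subset_right
  have hbddb : ∀ n, BddBelow (V n) := fun n => (bddBelow_Icc : BddBelow (Icc (0:ℝ) T)).mono (hVsub n)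
  have hbdda : ∀ n, BddAbove (V n) := fun n => (bddAbove_Icc : BddAbove (Icc (0:ℝ) T)).mono (hVsub n)
  refine ⟨fun n => if h : (V n).Nonempty then sInf (V n) else 0,
          fun n => if h : (V n).Nonempty then sSup (V n) else 0, ?_, ?_, ?_⟩
  · intro n
    by_cases h : (V n).Nonempty
    · simp only [dif_pos h]
      refine ⟨le_csInf h (fun x hx => (hVsub n hx).1), csInf_le_csSup h (hbddb n) (hbdda n),
        csSup_le h (fun x hx => (hVsub n hx).2)⟩
    · simp only [dif_neg h]
      exact ⟨le_rfl, le_rfl, hT⟩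
  · intro y hy
    obtain ⟨n, hn⟩ := mem_iUnion.1 (hcov hy)
    have hyV : y ∈ V n := ⟨hn, hK hy⟩
    have h : (V n).Nonempty := ⟨y, hyV⟩
    refine ⟨n, ?_⟩
    simp only [dif_pos h]
    exact ⟨csInf_le (hbddb n) hyV, le_csSup (hbdda n) hyV⟩
  · intro n
    by_cases h : (V n).Nonempty
    · have hUne : (U n).Nonempty := h.mono (inter_subset_left)
      rw [iSup_pos hUne]
      simp only [dif_pos h]
      refine ENNReal.rpow_le_rpow ?_ hs.le
      have hUb : Bornology.IsBounded (U n) := by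
        rw [Metric.isBounded_iff_ediam_ne_top]
        exact ((hdiam n).trans_lt ENNReal.one_lt_top).ne
      have hle : sSup (V n) ≤ sInf (V n) + Metric.diam (U n) := by
        apply csSup_le h
        intro y hy
        have : y - Metric.diam (U n) ≤ sInf (V n) := by
          apply le_csInf h
          intro x hx
          have hd : dist y x ≤ Metric.diam (U n) :=
            Metric.dist_le_diam_of_mem hUb hy.1 hx.1
          have : y - x ≤ dist y x := by
            rw [Real.dist_eq]; exact le_abs_self _
          linarith
        linarith
      calc ENNReal.ofReal (sSup (V n) - sInf (V n))
          ≤ ENNReal.ofReal (Metric.diam (U n)) := ENNReal.ofReal_le_ofReal (by linarith)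
        _ = EMetric.diam (U n) := by
          rw [Metric.diam]; exact ENNReal.ofReal_toReal ((hdiam n).trans_lt ENNReal.one_lt_top).ne
    · simp only [dif_neg h, sub_zero, ENNReal.ofReal_zero,
        ENNReal.zero_rpow_of_pos hs]
      exact zero_le

lemma ae_hContent_zero
    {Ω : Type*} [MeasurableSpace Ω] (ℙ : Measure Ω) [IsProbabilityMeasure ℙ]
    (T : ℝ) (hT : 0 ≤ T) (M : Ω → Measure ℝ) (hfin : ∀ ω, M ω Set.univ < ⊤)
    (hmeas : ∀ A : Set ℝ, MeasurableSet A → Measurable fun ω => M ω A)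
    {q s C : ℝ} (hq0 : 0 < q) (hq1 : q ≤ 1) (hs : 0 < s) (hC : 0 ≤ C)
    (hmom : ∀ x y : ℝ, 0 ≤ x → x ≤ y → y ≤ T →
      ∫⁻ ω, (M ω (Icc x y)) ^ q ∂ℙ ≤ ENNReal.ofReal (C * (y - x) ^ s))
    {K : Set ℝ} (hK : K ⊆ Icc 0 T) (hH : μH[s] K = 0) :
    ∀ᵐ ω ∂ℙ, hContentWith (fun x y => (M ω (Icc (min x y) (max x y))).toReal) q K = 0 := by
  have hcovm : ∀ m : ℕ, ∃ a b : ℕ → ℝ,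
      (∀ n, 0 ≤ a n ∧ a n ≤ b n ∧ b n ≤ T) ∧
      (∀ y ∈ K, ∃ n, a n ≤ y ∧ y ≤ b n) ∧
      ∑' n, ENNReal.ofReal (b n - a n) ^ s < (2⁻¹ : ℝ≥0∞)^m := by
    intro m
    have hδ : (0:ℝ≥0∞) < (2⁻¹ : ℝ≥0∞)^m :=
      ENNReal.pow_pos (ENNReal.inv_pos.mpr ENNReal.ofNat_ne_top) m
    obtain ⟨U, hUcov, hUdiam, hUsum⟩ := exists_cover_of_hausdorff_zero hH _ hδ
    obtain ⟨a, b, habT, hcov, hdle⟩ := intervals_of_cover hT hs hK U hUcov hUdiam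
    exact ⟨a, b, habT, hcov, lt_of_le_of_lt (ENNReal.tsum_le_tsum hdle) hUsum⟩
  choose a b habT hcov hsum using hcovm
  have hMmeas : ∀ (x y : ℝ), Measurable (fun ω => (M ω (Icc x y)) ^ q) := fun x y =>
    (ENNReal.continuous_rpow_const.measurable).comp (hmeas _ measurableSet_Icc)
  set S : ℕ → Ω → ℝ≥0∞ := fun m ω => ∑' n, (M ω (Icc (a m n) (b m n))) ^ q with hSdef
  have hSmeas : ∀ m, Measurable (S m) := fun m =>
    Measurable.ennreal_tsum (fun n => hMmeas _ _)
  have hSint : ∀ m, ∫⁻ ω, S m ω ∂ℙ ≤ ENNReal.ofReal C * (2⁻¹:ℝ≥0∞)^m := by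
    intro m
    rw [hSdef]
    dsimp only
    rw [lintegral_tsum (fun n => (hMmeas _ _).aemeasurable)]
    have hterm : ∀ n, ∫⁻ ω, (M ω (Icc (a m n) (b m n))) ^ q ∂ℙ ≤
        ENNReal.ofReal C * ENNReal.ofReal (b m n - a m n) ^ s := by
      intro n
      obtain ⟨h0a, hab, hbT⟩ := habT m n
      refine (hmom _ _ h0a hab hbT).trans (le_of_eq ?_)
      rw [ENNReal.ofReal_mul hC, ← ENNReal.ofReal_rpow_of_nonneg (by linarith) hs.le]
    calc ∑' n, ∫⁻ ω, (M ω (Icc (a m n) (b m n))) ^ q ∂ℙ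
        ≤ ∑' n, ENNReal.ofReal C * ENNReal.ofReal (b m n - a m n) ^ s :=
          ENNReal.tsum_le_tsum hterm
      _ = ENNReal.ofReal C * ∑' n, ENNReal.ofReal (b m n - a m n) ^ s :=
          ENNReal.tsum_mul_left
      _ ≤ ENNReal.ofReal C * (2⁻¹:ℝ≥0∞)^m := mul_le_mul_right (hsum m).le _
  have htot : ∫⁻ ω, ∑' m, S m ω ∂ℙ < ⊤ := by
    rw [lintegral_tsum (fun m => (hSmeas m).aemeasurable)]
    have h1 : ∑' m, ∫⁻ ω, S m ω ∂ℙ ≤ ENNReal.ofReal C * ∑' m : ℕ, (2⁻¹:ℝ≥0∞)^m := by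
      rw [← ENNReal.tsum_mul_left]
      exact ENNReal.tsum_le_tsum hSint
    refine lt_of_le_of_lt h1 ?_
    rw [ENNReal.tsum_geometric]
    refine ENNReal.mul_lt_top ENNReal.ofReal_lt_top ?_
    rw [ENNReal.one_sub_inv_two, inv_inv]
    exact ENNReal.ofNat_lt_top
  filter_upwards [ae_lt_top (Measurable.ennreal_tsum hSmeas) htot.ne] with ω hω
  have hS0 : Filter.Tendsto (fun m => S m ω) Filter.atTop (nhds 0) :=
    ENNReal.tendsto_atTop_zero_of_tsum_ne_top hω.ne
  have hMne : ∀ A : Set ℝ, M ω A ≠ ⊤ := fun A =>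
    ((measure_mono (subset_univ _)).trans_lt (hfin ω)).ne
  have hbound : ∀ m, hContentWith
      (fun x y => (M ω (Icc (min x y) (max x y))).toReal) q K
      ≤ S m ω + ENNReal.ofReal ((2:ℝ)⁻¹ ^ m) := by
    intro m
    set η : ℕ → ℝ := fun n => ((2:ℝ)⁻¹^(m+1) * (2:ℝ)⁻¹^n)^(1/q) with hηdef
    have hηpos : ∀ n, 0 < η n := fun n => Real.rpow_pos_of_pos (by positivity) _
    have hηq : ∀ n, (η n)^q = (2:ℝ)⁻¹^(m+1) * (2:ℝ)⁻¹^n := by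
      intro n
      rw [hηdef]
      dsimp only
      rw [← Real.rpow_mul (by positivity), one_div_mul_cancel hq0.ne', Real.rpow_one]
    set r : ℕ → ℝ := fun n => (M ω (Icc (a m n) (b m n))).toReal + η n with hrdef
    have hrpos : ∀ n, 0 < r n := fun n =>
      add_pos_of_nonneg_of_pos ENNReal.toReal_nonneg (hηpos n)
    have hcov2 : K ⊆ ⋃ n, {y |
        (fun x y => (M ω (Icc (min x y) (max x y))).toReal) (a m n) y < r n} := by
      intro y hy
      obtain ⟨n, h1, h2⟩ := hcov m y hy
      refine mem_iUnion.2 ⟨n, ?_⟩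
      show (M ω (Icc (min (a m n) y) (max (a m n) y))).toReal < r n
      rw [min_eq_left h1, max_eq_right h1]
      have hmono : M ω (Icc (a m n) y) ≤ M ω (Icc (a m n) (b m n)) :=
        measure_mono (Icc_subset_Icc_right h2)
      have := ENNReal.toReal_mono (hMne _) hmono
      rw [hrdef]
      dsimp only
      linarith [hηpos n]
    refine le_trans (hContentWith_le (fun n => a m n) r hrpos hcov2) ?_
    have hterm : ∀ n, ENNReal.ofReal (r n ^ q) ≤
        (M ω (Icc (a m n) (b m n)))^q + ENNReal.ofReal ((η n)^q) := by
      intro n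
      have h1 : ENNReal.ofReal (r n ^ q) = (ENNReal.ofReal (r n))^q :=
        (ENNReal.ofReal_rpow_of_nonneg (hrpos n).le hq0.le).symm
      rw [h1, hrdef]
      dsimp only
      rw [ENNReal.ofReal_add ENNReal.toReal_nonneg (hηpos n).le,
        ENNReal.ofReal_toReal (hMne _)]
      refine (ENNReal.rpow_add_le_add_rpow _ _ hq0.le hq1).trans ?_
      rw [ENNReal.ofReal_rpow_of_nonneg (hηpos n).le hq0.le]
    refine (ENNReal.tsum_le_tsum hterm).trans ?_
    rw [ENNReal.tsum_add]
    refine add_le_add le_rfl ?_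
    calc ∑' n, ENNReal.ofReal ((η n)^q)
        = ∑' n, ENNReal.ofReal ((2:ℝ)⁻¹^(m+1) * (2:ℝ)⁻¹^n) :=
          tsum_congr (fun n => by rw [hηq n])
      _ = ENNReal.ofReal (∑' n, (2:ℝ)⁻¹^(m+1) * (2:ℝ)⁻¹^n) :=
          (ENNReal.ofReal_tsum_of_nonneg (fun n => by positivity)
            ((summable_geometric_of_lt_one (by norm_num) (by norm_num)).mul_left _)).symm
      _ ≤ ENNReal.ofReal ((2:ℝ)⁻¹ ^ m) := by
          apply ENNReal.ofReal_le_ofReal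
          rw [tsum_mul_left, tsum_geometric_of_lt_one (by norm_num) (by norm_num)]
          rw [pow_succ, mul_assoc]
          norm_num
  have hlim : Filter.Tendsto (fun m => S m ω + ENNReal.ofReal ((2:ℝ)⁻¹^m))
      Filter.atTop (nhds 0) := by
    have h2 : Filter.Tendsto (fun m : ℕ => ENNReal.ofReal ((2:ℝ)⁻¹^m))
        Filter.atTop (nhds 0) := by
      have := ENNReal.tendsto_ofReal
        (tendsto_pow_atTop_nhds_zero_of_lt_one (by norm_num : (0:ℝ) ≤ 2⁻¹) (by norm_num))
      simpa using this
    simpa using hS0.add h2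
  exact le_antisymm (ge_of_tendsto' hlim hbound) zero_le

lemma zeta_slope {ψ ζ : ℝ → ℝ} (hconv : ConvexOn ℝ Set.univ ψ) (hψ0 : ψ 0 = 0)
    (hζ : ∀ q, ζ q = q - ψ q) {u v : ℝ} (hu : 0 < u) (huv : u < v) :
    ζ v - ζ u ≤ (v - u) * (1 + |ψ (-1)|) := by
  have s1 : (ψ 0 - ψ (-1)) / (0 - (-1)) ≤ (ψ u - ψ 0) / (u - 0) :=
    hconv.slope_mono_adjacent (Set.mem_univ _) (Set.mem_univ _) (by norm_num) hu
  have s2 : (ψ u - ψ 0) / (u - 0) ≤ (ψ v - ψ u) / (v - u) :=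
    hconv.slope_mono_adjacent (Set.mem_univ _) (Set.mem_univ _) hu huv
  have s3 : -|ψ (-1)| ≤ (ψ v - ψ u) / (v - u) := by
    refine le_trans ?_ (s1.trans s2)
    rw [hψ0]
    have h0 : (0 - ψ (-1)) / (0 - (-1)) = -ψ (-1) := by norm_num
    rw [h0]
    simp only [neg_le_neg_iff]
    exact le_abs_self _
  have hvu : 0 < v - u := by linarith
  have h4 : -|ψ (-1)| * (v - u) ≤ ψ v - ψ u := (le_div_iff₀ hvu).1 s3
  rw [hζ, hζ]
  nlinarith [abs_nonneg (ψ (-1))]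


/-- **Upper half of the KPZ relation.**
Let `ω ↦ M ω` be a measurable family of finite atomless Borel measures on `[0,T]` on a
probability space `(Ω, ℙ)`. Let `ψ` be convex with `ψ(0) = ψ(1) = 0`, `ζ(q) = q - ψ(q)`,
and `ζ(1+ε) > 1` for some `ε > 0`. If for every `q ∈ [0,1]` there is `C_q > 0` with
`E[M([x,y])^q] ≤ C_q (y-x)^{ζ(q)}` for all `0 ≤ x ≤ y ≤ T`, then for every `K ⊆ [0,T]`,
`ℙ`-a.s. `ζ(dim_H^{d_ω}(K)) ≤ dim_H(K)`, where `d_ω(x,y) = M_ω([min(x,y), max(x,y)])`. -/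
theorem zeta_dim_random_metric_le_dimH
    {Ω : Type*} [MeasurableSpace Ω] (ℙ : Measure Ω) [IsProbabilityMeasure ℙ]
    (T : ℝ) (hT : 0 < T)
    (M : Ω → Measure ℝ)
    (hfin : ∀ ω, M ω Set.univ < ⊤)
    (hsupp : ∀ ω, M ω (Set.Icc 0 T)ᶜ = 0)
    (hatom : ∀ ω, ∀ x : ℝ, M ω {x} = 0)
    (hmeas : ∀ A : Set ℝ, MeasurableSet A → Measurable fun ω => M ω A)
    (ψ : ℝ → ℝ) (hconv : ConvexOn ℝ Set.univ ψ) (hψ0 : ψ 0 = 0) (hψ1 : ψ 1 = 0)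
    (ζ : ℝ → ℝ) (hζ : ∀ q, ζ q = q - ψ q)
    (hnd : ∃ ε > 0, ζ (1 + ε) > 1)
    (hmom : ∀ q ∈ Set.Icc (0 : ℝ) 1, ∃ C > 0, ∀ x y : ℝ, 0 ≤ x → x ≤ y → y ≤ T →
      ∫⁻ ω, (M ω (Set.Icc x y)) ^ q ∂ℙ ≤ ENNReal.ofReal (C * (y - x) ^ ζ q)) :
    ∀ K : Set ℝ, K ⊆ Set.Icc 0 T →
      ∀ᵐ ω ∂ℙ,
        ENNReal.ofReal
            (ζ (dimWith (fun x y => (M ω (Set.Icc (min x y) (max x y))).toReal) K))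
          ≤ dimH K := by
  intro K hK
  obtain ⟨ε, hε, hεζ⟩ := hnd
  have hψle : ∀ u : ℝ, 0 ≤ u → u ≤ 1 → ψ u ≤ 0 := by
    intro u h0 h1
    have h2 := hconv.2 (Set.mem_univ (0:ℝ)) (Set.mem_univ (1:ℝ))
      (sub_nonneg.2 h1) h0 (by ring)
    simpa [smul_eq_mul, hψ0, hψ1] using h2
  have hζpos : ∀ u : ℝ, 0 < u → u ≤ 1 → 0 < ζ u := by
    intro u h0 h1
    have := hψle u h0.le h1
    rw [hζ]; linarith
  have hd1 : ∀ ω, dimWith (fun x y => (M ω (Set.Icc (min x y) (max x y))).toReal) K ≤ 1 := by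
    intro ω
    haveI : IsFiniteMeasure (M ω) := ⟨hfin ω⟩
    haveI : NullSingletonClass (M ω) := ⟨hatom ω⟩
    refine le_of_forall_gt_imp_ge_of_dense (fun t ht => dimWith_le (by linarith) ?_)
    exact hContentWith_zero_of_one_lt (M ω) hT.le ht hK
  have hQ : ∀ᵐ ω ∂ℙ, ∀ p : ℚ,
      (0 < (p:ℝ) ∧ (p:ℝ) ≤ 1 ∧ dimH K < ENNReal.ofReal (ζ p)) →
      dimWith (fun x y => (M ω (Set.Icc (min x y) (max x y))).toReal) K ≤ (p:ℝ) := by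
    rw [ae_all_iff]
    intro p
    by_cases hp : 0 < (p:ℝ) ∧ (p:ℝ) ≤ 1 ∧ dimH K < ENNReal.ofReal (ζ p)
    swap
    · exact Filter.Eventually.of_forall (fun ω h => absurd h hp)
    obtain ⟨hp0, hp1, hpd⟩ := hp
    obtain ⟨C, hCpos, hmomp⟩ := hmom p ⟨hp0.le, hp1⟩
    have hζp : 0 < ζ p := hζpos _ hp0 hp1
    have hH : μH[ζ (p:ℝ)] K = 0 := by
      have h1 : dimH K < ((ζ (p:ℝ)).toNNReal : ℝ≥0∞) := hpd
      have h2 := hausdorffMeasure_of_dimH_lt h1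
      simpa [Real.coe_toNNReal _ hζp.le] using h2
    filter_upwards [ae_hContent_zero ℙ T hT.le M hfin hmeas hp0 hp1 hζp hCpos.le
      hmomp hK hH] with ω hω
    exact fun _ => dimWith_le hp0.le hω
  filter_upwards [hQ] with ω hω
  set x := dimWith (fun x y => (M ω (Set.Icc (min x y) (max x y))).toReal) K with hxdef
  have hx0 : 0 ≤ x := dimWith_nonneg _ _
  have hx1 : x ≤ 1 := hd1 ω
  have hζ1 : ζ 1 = 1 := by rw [hζ, hψ1]; ring
  by_cases hD : dimH K < 1
  · have hDne : dimH K ≠ ⊤ := ne_top_of_lt hD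
    have hdr1 : (dimH K).toReal < 1 :=
      ENNReal.toReal_lt_of_lt_ofReal (by simpa [ENNReal.ofReal_one] using hD)
    have hdr0 : 0 ≤ (dimH K).toReal := ENNReal.toReal_nonneg
    have hgoal : ζ x ≤ (dimH K).toReal := by
      by_contra hcon
      push_neg at hcon
      have hxpos : 0 < x := by
        rcases hx0.eq_or_lt with h | h
        · exfalso
          rw [← h, hζ, hψ0] at hcon
          linarith
        · exact h
      set L := 1 + |ψ (-1)| with hLdef
      have hLpos : 0 < L := by positivity
      have hcL : 0 < (ζ x - (dimH K).toReal) / L := div_pos (by linarith) hLpos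
      obtain ⟨p, hp1, hp2⟩ := exists_rat_btwn
        (max_lt hxpos (by linarith : x - (ζ x - (dimH K).toReal) / L < x))
      have hp0 : 0 < (p:ℝ) := lt_of_le_of_lt (le_max_left _ _) hp1
      have hppx : x - (ζ x - (dimH K).toReal) / L < p :=
        lt_of_le_of_lt (le_max_right _ _) hp1
      have hζxp : ζ x - ζ p ≤ (x - p) * L := by
        rw [hLdef]
        exact zeta_slope hconv hψ0 hζ hp0 hp2
      have hζpd : (dimH K).toReal < ζ p := by
        have h1 : x - (p:ℝ) < (ζ x - (dimH K).toReal) / L := by linarith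
        have h2 : (x - p) * L < ((ζ x - (dimH K).toReal) / L) * L :=
          mul_lt_mul_of_pos_right h1 hLpos
        rw [div_mul_cancel₀ _ hLpos.ne'] at h2
        linarith
      have hkey := hω p ⟨hp0, le_trans hp2.le hx1, by
        rw [← ENNReal.ofReal_toReal hDne]
        exact (ENNReal.ofReal_lt_ofReal_iff (lt_of_le_of_lt hdr0 hζpd)).2 hζpd⟩
      linarith
    calc ENNReal.ofReal (ζ x) ≤ ENNReal.ofReal ((dimH K).toReal) :=
          ENNReal.ofReal_le_ofReal hgoal
      _ = dimH K := ENNReal.ofReal_toReal hDne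
  · push_neg at hD
    have hζx : ζ x ≤ 1 := by
      rw [← hζ1]
      exact zeta_mono hconv hψ1 hζ hε hεζ hx1 le_rfl
    calc ENNReal.ofReal (ζ x) ≤ ENNReal.ofReal 1 := ENNReal.ofReal_le_ofReal hζx
      _ = 1 := ENNReal.ofReal_one
      _ ≤ dimH K := hD
end

section
/- Let (Ω, ℱ, ℙ) be a probability space, T > 0, and ω ↦ M_ω a measurable family of finite atomless Borel measures on [0,T], inducing pseudometrics d_ω(x,y) = M_ω([min(x,y), max(x,y)]). Let K ⊆ [0,T] be Borel and q ∈ (0,1]. Suppose there is a measurable family ω ↦ ν_ω of finite Borel measures on [0,T] such that ℙ-almost surely ν_ω([0,T] \ K) = 0 and ν_ω([0,T]) > 0, and such that ∫_Ω ( ∫_{[0,T]×[0,T]} d_ω(x,y)^{−q} ν_ω(dx) ν_ω(dy) ) ℙ(dω) < ∞. Then ℙ-almost surely the Hausdorff dimension of K with respect to d_ω is at least q. -/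
open MeasureTheory
open scoped ENNReal

section AuxMeas
variable {α : Type*} [MeasurableSpace α]

lemma aux_section_meas (κ : α → Measure ℝ)
    (hfin : ∀ a, κ a Set.univ ≠ ⊤)
    (hmeas : ∀ A : Set ℝ, MeasurableSet A → Measurable fun a => κ a A)
    {t : Set (α × ℝ)} (ht : MeasurableSet t) :
    Measurable fun a => κ a (Prod.mk a ⁻¹' t) := by
  refine MeasurableSpace.induction_on_inter
    (C := fun t _ => Measurable fun a => κ a (Prod.mk a ⁻¹' t))
    generateFrom_prod.symm isPiSystem_prod ?_ ?_ ?_ ?_ _ ht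
  · simp only [Set.preimage_empty, measure_empty, measurable_const]
  · intro t' ht'
    simp only [Set.mem_image2, Set.mem_setOf_eq, exists_and_left] at ht'
    obtain ⟨t₁, ht₁, t₂, ht₂, rfl⟩ := ht'
    classical
    simp_rw [Set.mk_preimage_prod_right_eq_if]
    have h_eq_ite : (fun a => κ a (ite (a ∈ t₁) t₂ ∅)) = fun a => ite (a ∈ t₁) (κ a t₂) 0 := by
      ext1 a; split_ifs; exacts [rfl, measure_empty]
    rw [h_eq_ite]
    exact Measurable.ite ht₁ (hmeas _ ht₂) measurable_const
  · intro t' ht' h_meas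
    have h_eq : (fun a => κ a (Prod.mk a ⁻¹' t'ᶜ)) = fun a =>
        κ a Set.univ - κ a (Prod.mk a ⁻¹' t') := by
      ext1 a
      have h1 : Prod.mk a ⁻¹' t'ᶜ = Set.univ \ Prod.mk a ⁻¹' t' := by ext1 b; simp
      rw [h1, ← Set.diff_inter_self_eq_diff, Set.inter_univ,
        measure_diff (Set.subset_univ _) (measurable_prodMk_left ht').nullMeasurableSet
          (ne_top_of_le_ne_top (hfin a) (measure_mono (Set.subset_univ _)))]
    rw [h_eq]
    exact Measurable.sub (hmeas _ MeasurableSet.univ) h_meas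
  · intro f h_disj hf_meas hf
    have h_Union : (fun a => κ a (Prod.mk a ⁻¹' ⋃ i, f i))
        = fun a => ∑' i, κ a (Prod.mk a ⁻¹' f i) := by
      ext1 a
      rw [Set.preimage_iUnion, measure_iUnion]
      · intro i j hij s hsi hsj b hbs
        have habi : {(a, b)} ⊆ f i := by
          rw [Set.singleton_subset_iff]; exact hsi hbs
        have habj : {(a, b)} ⊆ f j := by
          rw [Set.singleton_subset_iff]; exact hsj hbs
        simpa only [Set.bot_eq_empty, Set.le_eq_subset, Set.singleton_subset_iff,
          Set.mem_empty_iff_false] using h_disj hij habi habj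
      · exact fun i => measurable_prodMk_left (hf_meas i)
    rw [h_Union]
    exact Measurable.ennreal_tsum hf

lemma aux_lintegral_meas (κ : α → Measure ℝ)
    (hfin : ∀ a, κ a Set.univ ≠ ⊤)
    (hmeas : ∀ A : Set ℝ, MeasurableSet A → Measurable fun a => κ a A)
    {f : α × ℝ → ℝ≥0∞} (hf : Measurable f) :
    Measurable fun a => ∫⁻ x, f (a, x) ∂(κ a) := by
  refine Measurable.ennreal_induction
    (motive := fun f : α × ℝ → ℝ≥0∞ => Measurable fun a => ∫⁻ x, f (a, x) ∂(κ a))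
    ?_ ?_ ?_ hf
  · intro c S hS
    have h1 : ∀ a, (fun x => S.indicator (fun _ => c) (a, x))
        = (Prod.mk a ⁻¹' S).indicator (fun _ => c) := by
      intro a; ext1 x
      by_cases h : (a, x) ∈ S <;> simp [Set.indicator, h]
    simp_rw [h1]
    have h2 : ∀ a, ∫⁻ x, (Prod.mk a ⁻¹' S).indicator (fun _ => c) x ∂(κ a)
        = c * κ a (Prod.mk a ⁻¹' S) := fun a =>
      lintegral_indicator_const (measurable_prodMk_left hS) c
    simp_rw [h2]
    exact (aux_section_meas κ hfin hmeas hS).const_mul c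
  · intro f g _ hfm hgm hPf hPg
    have : ∀ a, ∫⁻ x, (f + g) (a, x) ∂(κ a)
        = (∫⁻ x, f (a, x) ∂(κ a)) + ∫⁻ x, g (a, x) ∂(κ a) := fun a =>
      lintegral_add_left (hfm.comp measurable_prodMk_left) _
    simp_rw [this]
    exact hPf.add hPg
  · intro f hfm hmono hPf
    have : ∀ a, ∫⁻ x, ⨆ n, f n (a, x) ∂(κ a) = ⨆ n, ∫⁻ x, f n (a, x) ∂(κ a) := fun a =>
      lintegral_iSup (fun n => (hfm n).comp measurable_prodMk_left)
        (fun i j hij x => hmono hij _)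
    simp_rw [this]
    exact Measurable.iSup hPf

end AuxMeas

section AuxG
variable {α : Type*} [MeasurableSpace α]

lemma aux_Iic_meas (M : α → Measure ℝ)
    (hfin : ∀ a, M a Set.univ ≠ ⊤)
    (hmeas : ∀ A : Set ℝ, MeasurableSet A → Measurable fun a => M a A) :
    Measurable fun p : α × ℝ => M p.1 (Set.Iic p.2) := by
  have key : ∀ p : α × ℝ, M p.1 (Set.Iic p.2)
      = ⨅ (r : ℚ), (if p.2 < (r : ℝ) then M p.1 (Set.Iic (r : ℝ)) else ⊤) := by
    rintro ⟨a, x⟩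
    apply le_antisymm
    · refine le_iInf fun r => ?_
      split_ifs with h
      · exact measure_mono (Set.Iic_subset_Iic.mpr h.le)
      · exact le_top
    · have hx : ∃ r : ℚ, x < (r : ℝ) := exists_rat_gt x
      have hInter : Set.Iic x = ⋂ (r : {r : ℚ // x < (r : ℝ)}), Set.Iic ((r : ℚ) : ℝ) := by
        ext z
        simp only [Set.mem_Iic, Set.mem_iInter]
        constructor
        · intro hz r; exact hz.trans r.2.le
        · intro hz
          by_contra hzx
          push_neg at hzx
          obtain ⟨r, hr1, hr2⟩ := exists_rat_btwn hzx
          exact absurd (hz ⟨r, hr1⟩) (not_le.mpr hr2)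
      have : M a (Set.Iic x) = ⨅ (r : {r : ℚ // x < (r : ℝ)}), M a (Set.Iic ((r : ℚ) : ℝ)) := by
        rw [hInter]
        refine Directed.measure_iInter (fun r => measurableSet_Iic.nullMeasurableSet) ?_ ?_
        · intro r s
          rcases le_total (r : ℚ) (s : ℚ) with h | h
          · exact ⟨r, subset_rfl, Set.Iic_subset_Iic.mpr (by exact_mod_cast h)⟩
          · exact ⟨s, Set.Iic_subset_Iic.mpr (by exact_mod_cast h), subset_rfl⟩
        · obtain ⟨r, hr⟩ := hx
          exact ⟨⟨r, hr⟩, ne_top_of_le_ne_top (hfin a) (measure_mono (Set.subset_univ _))⟩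
      rw [this]
      refine le_iInf fun r => ?_
      refine iInf_le_of_le (r : ℚ) ?_
      rw [if_pos r.2]
  simp_rw [key]
  refine Measurable.iInf fun r => ?_
  refine Measurable.ite ?_ ((hmeas _ measurableSet_Iic).comp measurable_fst) measurable_const
  exact measurableSet_lt measurable_snd measurable_const

lemma aux_Icc_eq (M : α → Measure ℝ)
    (hfin : ∀ a, M a Set.univ ≠ ⊤)
    (hatom : ∀ a, ∀ x : ℝ, M a {x} = 0)
    (a : α) {x y : ℝ} (hxy : x ≤ y) :
    M a (Set.Icc x y) = M a (Set.Iic y) - M a (Set.Iic x) := by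
  have hIio : M a (Set.Iio x) = M a (Set.Iic x) := by
    apply le_antisymm (measure_mono Set.Iio_subset_Iic_self)
    calc M a (Set.Iic x) = M a (Set.Iio x ∪ {x}) := by
          rw [Set.Iio_union_right]
      _ ≤ M a (Set.Iio x) + M a {x} := measure_union_le _ _
      _ = M a (Set.Iio x) := by rw [hatom a x, add_zero]
  have hsplit : M a (Set.Icc x y) + M a (Set.Iic x) = M a (Set.Iic y) := by
    rw [← hIio, add_comm, ← measure_union ?_ measurableSet_Icc]
    · rw [Set.Iio_union_Icc_eq_Iic hxy]
    · exact (Set.Iio_disjoint_Ici le_rfl).mono_right Set.Icc_subset_Ici_self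
  exact ENNReal.eq_sub_of_add_eq (ne_top_of_le_ne_top (hfin a)
    (measure_mono (Set.subset_univ _))) hsplit

lemma aux_D_meas (M : α → Measure ℝ)
    (hfin : ∀ a, M a Set.univ ≠ ⊤)
    (hatom : ∀ a, ∀ x : ℝ, M a {x} = 0)
    (hmeas : ∀ A : Set ℝ, MeasurableSet A → Measurable fun a => M a A) :
    Measurable fun p : α × ℝ × ℝ =>
      M p.1 (Set.Icc (min p.2.1 p.2.2) (max p.2.1 p.2.2)) := by
  have key : ∀ p : α × ℝ × ℝ, M p.1 (Set.Icc (min p.2.1 p.2.2) (max p.2.1 p.2.2))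
      = M p.1 (Set.Iic (max p.2.1 p.2.2)) - M p.1 (Set.Iic (min p.2.1 p.2.2)) := by
    rintro ⟨a, x, y⟩
    exact aux_Icc_eq M hfin hatom a (min_le_max)
  simp_rw [key]
  have hG := aux_Iic_meas M hfin hmeas
  refine Measurable.sub ?_ ?_
  · exact hG.comp (measurable_fst.prodMk (measurable_snd.fst.max measurable_snd.snd))
  · exact hG.comp (measurable_fst.prodMk (measurable_snd.fst.min measurable_snd.snd))

end AuxG

lemma aux_Iio_eq_Iic (M0 : Measure ℝ) (hatom : ∀ x : ℝ, M0 {x} = 0) (x : ℝ) :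
    M0 (Set.Iio x) = M0 (Set.Iic x) := by
  apply le_antisymm (measure_mono Set.Iio_subset_Iic_self)
  calc M0 (Set.Iic x) = M0 (Set.Iio x ∪ {x}) := by rw [Set.Iio_union_right]
    _ ≤ M0 (Set.Iio x) + M0 {x} := measure_union_le _ _
    _ = M0 (Set.Iio x) := by rw [hatom x, add_zero]

lemma aux_inverse (M0 : Measure ℝ) {T : ℝ} (hT : 0 < T)
    (hfin : M0 Set.univ ≠ ⊤)
    (hsupp : M0 (Set.Icc 0 T)ᶜ = 0) (hatom : ∀ x : ℝ, M0 {x} = 0)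
    {s : ℝ} (hs0 : 0 ≤ s) (hsL : s ≤ (M0 Set.univ).toReal) :
    ∃ c ∈ Set.Icc 0 T, M0 (Set.Iio c) = ENNReal.ofReal s
      ∧ M0 (Set.Iic c) = ENNReal.ofReal s := by
  have hIic0 : M0 (Set.Iic 0) = 0 := by
    refine le_antisymm ?_ (zero_le)
    calc M0 (Set.Iic 0) ≤ M0 ({0} ∪ (Set.Icc 0 T)ᶜ) := by
          refine measure_mono fun z hz => ?_
          rcases eq_or_lt_of_le (Set.mem_Iic.mp hz) with h | h
          · exact Or.inl (by simp [h])
          · exact Or.inr fun hmem => absurd hmem.1 (not_le.mpr h)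
      _ ≤ M0 {0} + M0 (Set.Icc 0 T)ᶜ := measure_union_le _ _
      _ = 0 := by rw [hatom 0, hsupp, add_zero]
  set A : Set ℝ := {x ∈ Set.Icc 0 T | M0 (Set.Iic x) ≤ ENNReal.ofReal s} with hA
  have h0A : (0 : ℝ) ∈ A := ⟨⟨le_refl 0, hT.le⟩, by rw [hIic0]; exact zero_le⟩
  have hAne : A.Nonempty := ⟨0, h0A⟩
  have hAbdd : BddAbove A := ⟨T, fun x hx => hx.1.2⟩
  set c := sSup A with hc
  have hc0 : 0 ≤ c := le_csSup hAbdd h0A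
  have hcT : c ≤ T := csSup_le hAne fun x hx => hx.1.2
  refine ⟨c, ⟨hc0, hcT⟩, ?_⟩
  have hfin' : ∀ S : Set ℝ, M0 S ≠ ⊤ :=
    fun S => ne_top_of_le_ne_top hfin (measure_mono (Set.subset_univ _))
  -- upper bound for M0 (Iio c)
  have hup : M0 (Set.Iio c) ≤ ENNReal.ofReal s := by
    have hun : Set.Iio c = ⋃ n : ℕ, Set.Iic (c - 1 / (n + 1)) := by
      ext z
      simp only [Set.mem_Iio, Set.mem_iUnion, Set.mem_Iic]
      constructor
      · intro hz
        obtain ⟨n, hn⟩ := exists_nat_one_div_lt (sub_pos.mpr hz)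
        exact ⟨n, by linarith⟩
      · rintro ⟨n, hn⟩
        have : (0:ℝ) < 1 / (n + 1) := by positivity
        linarith
    have hmono : Monotone fun n : ℕ => Set.Iic (c - 1 / ((n:ℝ) + 1)) := by
      intro m n hmn
      apply Set.Iic_subset_Iic.mpr
      have : (1:ℝ) / (n + 1) ≤ 1 / (m + 1) := by
        apply one_div_le_one_div_of_le <;> [positivity; exact_mod_cast by
          exact_mod_cast add_le_add_left (Nat.cast_le.mpr hmn) 1]
      linarith
    have htend := tendsto_measure_iUnion_atTop (μ := M0) hmono
    rw [← hun] at htend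
    refine le_of_tendsto htend (Filter.Eventually.of_forall fun n => ?_)
    have hlt : c - 1 / ((n:ℝ) + 1) < c := by
      have : (0:ℝ) < 1 / (n + 1) := by positivity
      linarith
    obtain ⟨x, hxA, hx⟩ := exists_lt_of_lt_csSup hAne hlt
    calc M0 (Set.Iic (c - 1 / ((n:ℝ) + 1))) ≤ M0 (Set.Iic x) :=
          measure_mono (Set.Iic_subset_Iic.mpr hx.le)
      _ ≤ ENNReal.ofReal s := hxA.2
  -- lower bound for M0 (Iic c)
  have hlow : ENNReal.ofReal s ≤ M0 (Set.Iic c) := by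
    have hin : Set.Iic c = ⋂ n : ℕ, Set.Iic (c + 1 / (n + 1)) := by
      ext z
      simp only [Set.mem_Iic, Set.mem_iInter]
      constructor
      · intro hz n
        have : (0:ℝ) < 1 / ((n:ℝ) + 1) := by positivity
        linarith
      · intro hz
        by_contra hzc
        push_neg at hzc
        obtain ⟨n, hn⟩ := exists_nat_one_div_lt (sub_pos.mpr hzc)
        have := hz n
        linarith
    have hanti : Antitone fun n : ℕ => Set.Iic (c + 1 / ((n:ℝ) + 1)) := by
      intro m n hmn
      apply Set.Iic_subset_Iic.mpr
      have : (1:ℝ) / (n + 1) ≤ 1 / (m + 1) := by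
        apply one_div_le_one_div_of_le <;> [positivity; exact_mod_cast by
          exact_mod_cast add_le_add_left (Nat.cast_le.mpr hmn) 1]
      linarith
    have htend := tendsto_measure_iInter_atTop (μ := M0)
      (fun n => measurableSet_Iic.nullMeasurableSet) hanti ⟨0, hfin' _⟩
    rw [← hin] at htend
    refine ge_of_tendsto htend (Filter.Eventually.of_forall fun n => ?_)
    have hcx : c < c + 1 / ((n:ℝ) + 1) := by
      have : (0:ℝ) < 1 / ((n:ℝ) + 1) := by positivity
      linarith
    by_cases hxT : c + 1 / ((n:ℝ) + 1) ≤ T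
    · -- the point is in [0,T] but above the sup, hence not in A
      have hnotA : c + 1 / ((n:ℝ) + 1) ∉ A := fun hmem =>
        absurd (le_csSup hAbdd hmem) (not_le.mpr hcx)
      have : ¬ M0 (Set.Iic (c + 1 / ((n:ℝ) + 1))) ≤ ENNReal.ofReal s := by
        intro hle
        exact hnotA ⟨⟨by linarith, hxT⟩, hle⟩
      exact (not_le.mp this).le
    · -- the point is above T; use that all the mass is in [0,T]
      have hIicT : M0 Set.univ = M0 (Set.Iic (c + 1 / ((n:ℝ) + 1))) := by
        refine le_antisymm ?_ (measure_mono (Set.subset_univ _))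
        calc M0 Set.univ ≤ M0 (Set.Iic (c + 1 / ((n:ℝ) + 1)) ∪ (Set.Icc 0 T)ᶜ) := by
              refine measure_mono fun z _ => ?_
              by_cases hz : z ≤ c + 1 / ((n:ℝ) + 1)
              · exact Or.inl hz
              · push_neg at hz
                refine Or.inr fun hmem => ?_
                have := hmem.2
                push_neg at hxT
                linarith
          _ ≤ M0 (Set.Iic (c + 1 / ((n:ℝ) + 1))) + M0 (Set.Icc 0 T)ᶜ :=
              measure_union_le _ _
          _ = _ := by rw [hsupp, add_zero]
      calc ENNReal.ofReal s ≤ M0 Set.univ :=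
            (ENNReal.ofReal_le_iff_le_toReal hfin).mpr hsL
        _ = _ := hIicT
  have hIio := aux_Iio_eq_Iic M0 hatom c
  have h1 : M0 (Set.Iic c) = ENNReal.ofReal s := le_antisymm (hIio ▸ hup) hlow
  exact ⟨hIio.trans h1, h1⟩

set_option maxHeartbeats 1000000 in
lemma aux_content_le (M0 : Measure ℝ) {T : ℝ} (hT : 0 < T)
    (hfin : M0 Set.univ ≠ ⊤)
    (hsupp : M0 (Set.Icc 0 T)ᶜ = 0) (hatom : ∀ x : ℝ, M0 {x} = 0)
    (K : Set ℝ) (hK : K ⊆ Set.Icc 0 T) (N : ℕ) (hN : 1 ≤ N) :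
    hContentWith (fun x y => (M0 (Set.Icc (min x y) (max x y))).toReal) 2 K
      ≤ ((N : ℝ≥0∞) + 2) * ENNReal.ofReal ((((M0 Set.univ).toReal + 1) / N) ^ (2:ℕ)) := by
  set L : ℝ := (M0 Set.univ).toReal with hL
  have hL0 : 0 ≤ L := ENNReal.toReal_nonneg
  set ρ : ℝ := (L + 1) / N with hρ
  have hN0 : (0:ℝ) < N := by exact_mod_cast hN
  have hρ0 : 0 < ρ := by positivity
  have hfin' : ∀ S : Set ℝ, M0 S ≠ ⊤ :=
    fun S => ne_top_of_le_ne_top hfin (measure_mono (Set.subset_univ _))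
  -- choose approximate quantile points
  have hex : ∀ k : ℕ, ∃ c, c ∈ Set.Icc (0:ℝ) T ∧
      M0 (Set.Iio c) = ENNReal.ofReal (min ((k:ℝ) * L / N) L)
      ∧ M0 (Set.Iic c) = ENNReal.ofReal (min ((k:ℝ) * L / N) L) := by
    intro k
    have h1 : 0 ≤ min ((k:ℝ) * L / N) L := le_min (by positivity) hL0
    obtain ⟨c, hc, h2, h3⟩ := aux_inverse M0 hT hfin hsupp hatom h1 (min_le_right _ _)
    exact ⟨c, hc, h2, h3⟩
  choose cc hccIcc hccIio hccIic using hex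
  set r : ℕ → ℝ := fun n => ρ * (2⁻¹ : ℝ) ^ (n - N) with hr
  have hrpos : ∀ n, 0 < r n := fun n => by positivity
  -- the cover property
  have hcov : K ⊆ ⋃ n, {y | (M0 (Set.Icc (min (cc n) y) (max (cc n) y))).toReal < r n} := by
    intro y hyK
    have hyIcc := hK hyK
    set gy : ℝ := (M0 (Set.Iic y)).toReal with hgy
    have hgy0 : 0 ≤ gy := ENNReal.toReal_nonneg
    have hgyL : gy ≤ L := ENNReal.toReal_mono hfin (measure_mono (Set.subset_univ _))
    -- choose the index k
    obtain ⟨k, hkN, hsk_le, hgy_le⟩ :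
        ∃ k : ℕ, k < N ∧ (k:ℝ) * L / N ≤ gy ∧ gy ≤ (k:ℝ) * L / N + L / N := by
      by_cases hLpos : 0 < L
      · set k0 := ⌊gy * N / L⌋₊ with hk0
        by_cases hk0N : k0 ≤ N - 1
        · refine ⟨k0, lt_of_le_of_lt hk0N (Nat.sub_lt hN one_pos), ?_, ?_⟩
          · have h1 : (k0 : ℝ) ≤ gy * N / L := Nat.floor_le (by positivity)
            rw [div_le_iff₀ hN0]
            have h2 : (k0:ℝ) * L ≤ gy * N / L * L := by nlinarith
            have h3 : gy * N / L * L = gy * N := by field_simp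
            linarith
          · have h2 : gy * N / L < k0 + 1 := Nat.lt_floor_add_one _
            rw [div_lt_iff₀ hLpos] at h2
            have h4 : gy ≤ ((k0:ℝ) + 1) * L / N := by
              rw [le_div_iff₀ hN0]; nlinarith
            calc gy ≤ ((k0:ℝ)+1) * L / N := h4
              _ = (k0:ℝ) * L / N + L / N := by ring
        · push_neg at hk0N
          have hNk0 : N ≤ k0 := by omega
          have h3 : (N : ℝ) ≤ gy * N / L := (Nat.le_floor_iff (by positivity)).mp hNk0
          have hLgy : L ≤ gy := by
            rw [le_div_iff₀ hLpos] at h3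
            nlinarith
          have hgyL' : gy = L := le_antisymm hgyL hLgy
          refine ⟨N - 1, Nat.sub_lt hN one_pos, ?_, ?_⟩
          · have hcast : ((N - 1 : ℕ) : ℝ) = (N:ℝ) - 1 := by
              rw [Nat.cast_sub hN]; norm_num
            rw [hcast, hgyL']
            rw [div_le_iff₀ hN0]
            nlinarith
          · have hcast : ((N - 1 : ℕ) : ℝ) = (N:ℝ) - 1 := by
              rw [Nat.cast_sub hN]; norm_num
            rw [hcast, hgyL']
            have : ((N:ℝ) - 1) * L / N + L / N = L := by field_simp; ring
            linarith
      · push_neg at hLpos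
        have hL0' : L = 0 := le_antisymm hLpos hL0
        refine ⟨0, hN, by simpa [hL0'] using hgy0.trans (le_of_eq rfl), ?_⟩
        simp only [Nat.cast_zero, zero_mul, zero_div, zero_add, hL0']
        simpa [hL0'] using hgyL
    -- the chosen ball covers y
    refine Set.mem_iUnion.mpr ⟨k, ?_⟩
    have hrk : r k = ρ := by
      have : k - N = 0 := Nat.sub_eq_zero_of_le hkN.le
      simp [hr, this]
    have hskL : (k:ℝ) * L / N ≤ L := by
      rw [div_le_iff₀ hN0]
      have : (k : ℝ) ≤ N := by exact_mod_cast hkN.le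
      nlinarith
    have hmin : min ((k:ℝ) * L / N) L = (k:ℝ) * L / N := min_eq_left hskL
    set c := cc k with hcdef
    have hIio : M0 (Set.Iio c) = ENNReal.ofReal ((k:ℝ) * L / N) := by
      rw [hccIio k, hmin]
    have hIic : M0 (Set.Iic c) = ENNReal.ofReal ((k:ℝ) * L / N) := by
      rw [hccIic k, hmin]
    have hgyeq : M0 (Set.Iic y) = ENNReal.ofReal gy := (ENNReal.ofReal_toReal (hfin' _)).symm
    simp only [Set.mem_setOf_eq, hrk]
    rcases le_total y c with hyc | hcy
    · -- y ≤ c : the interval [y,c] has measure 0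
      rw [min_eq_right hyc, max_eq_left hyc]
      have hsub : M0 (Set.Icc y c) = M0 (Set.Iic c) - M0 (Set.Iic y) := by
        have hIio' := aux_Iio_eq_Iic M0 hatom y
        have hsplit : M0 (Set.Icc y c) + M0 (Set.Iic y) = M0 (Set.Iic c) := by
          rw [← hIio', add_comm, ← measure_union ?_ measurableSet_Icc]
          · rw [Set.Iio_union_Icc_eq_Iic hyc]
          · exact (Set.Iio_disjoint_Ici le_rfl).mono_right Set.Icc_subset_Ici_self
        exact ENNReal.eq_sub_of_add_eq (hfin' _) hsplit
      have hle : M0 (Set.Iic c) ≤ M0 (Set.Iic y) := by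
        rw [hIic, hgyeq]
        exact ENNReal.ofReal_le_ofReal hsk_le
      rw [hsub, tsub_eq_zero_of_le hle]
      simpa using hρ0
    · -- c ≤ y
      rw [min_eq_left hcy, max_eq_right hcy]
      have hsub : M0 (Set.Icc c y) = M0 (Set.Iic y) - M0 (Set.Iio c) := by
        have hsplit : M0 (Set.Icc c y) + M0 (Set.Iio c) = M0 (Set.Iic y) := by
          rw [add_comm, ← measure_union ?_ measurableSet_Icc]
          · rw [Set.Iio_union_Icc_eq_Iic hcy]
          · exact (Set.Iio_disjoint_Ici le_rfl).mono_right Set.Icc_subset_Ici_self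
        exact ENNReal.eq_sub_of_add_eq (hfin' _) hsplit
      rw [hsub, hIio, hgyeq, ← ENNReal.ofReal_sub _ (by positivity)]
      rw [ENNReal.toReal_ofReal (by linarith)]
      calc gy - (k:ℝ) * L / N ≤ L / N := by linarith
        _ < (L + 1) / N := (div_lt_div_iff_of_pos_right hN0).mpr (by linarith)
        _ = ρ := rfl
  -- bound the content by the value of this cover
  have hle1 : hContentWith (fun x y => (M0 (Set.Icc (min x y) (max x y))).toReal) 2 K
      ≤ ∑' n, ENNReal.ofReal (r n ^ (2:ℝ)) := by
    rw [hContentWith]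
    exact iInf_le_of_le cc (iInf_le_of_le r (iInf_le_of_le ⟨hrpos, hcov⟩ le_rfl))
  refine hle1.trans ?_
  -- compute/bound the sum
  have hterm : ∀ n, ENNReal.ofReal (r n ^ (2:ℝ))
      ≤ ENNReal.ofReal (ρ ^ (2:ℕ)) * (2⁻¹ : ℝ≥0∞) ^ (n - N) := by
    intro n
    have h2 : r n ^ (2:ℝ) = r n ^ (2:ℕ) := by
      rw [← Real.rpow_natCast (r n) 2]; norm_num
    rw [h2, hr]
    have hexp : (ρ * (2⁻¹:ℝ) ^ (n - N)) ^ (2:ℕ)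
        = ρ ^ (2:ℕ) * ((2⁻¹:ℝ) ^ (n - N)) ^ (2:ℕ) := by ring
    rw [hexp, ENNReal.ofReal_mul (by positivity)]
    refine mul_le_mul_right ?_ _
    have hle2 : ((2⁻¹:ℝ) ^ (n - N)) ^ (2:ℕ) ≤ (2⁻¹:ℝ) ^ (n - N) := by
      have h1 : (0:ℝ) ≤ (2⁻¹:ℝ) ^ (n - N) := by positivity
      have h2 : (2⁻¹:ℝ) ^ (n - N) ≤ 1 := pow_le_one₀ (by norm_num) (by norm_num)
      nlinarith
    refine (ENNReal.ofReal_le_ofReal hle2).trans ?_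
    rw [ENNReal.ofReal_pow (by norm_num)]
    have : ENNReal.ofReal (2⁻¹:ℝ) = (2⁻¹ : ℝ≥0∞) := by
      rw [ENNReal.ofReal_inv_of_pos (by norm_num)]
      norm_num
    rw [this]
  calc ∑' n, ENNReal.ofReal (r n ^ (2:ℝ))
      ≤ ∑' n, ENNReal.ofReal (ρ ^ (2:ℕ)) * (2⁻¹ : ℝ≥0∞) ^ (n - N) :=
        ENNReal.tsum_le_tsum hterm
    _ = ENNReal.ofReal (ρ ^ (2:ℕ)) * ∑' n, (2⁻¹ : ℝ≥0∞) ^ (n - N) :=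
        ENNReal.tsum_mul_left
    _ ≤ ENNReal.ofReal (ρ ^ (2:ℕ)) * ((N : ℝ≥0∞) + 2) := by
        refine mul_le_mul_right ?_ _
        rw [ENNReal.tsum_eq_iSup_sum]
        refine iSup_le fun s => ?_
        obtain ⟨m, hm⟩ := s.exists_nat_subset_range
        calc ∑ i ∈ s, (2⁻¹ : ℝ≥0∞) ^ (i - N)
            ≤ ∑ i ∈ Finset.range (N + m), (2⁻¹ : ℝ≥0∞) ^ (i - N) := by
              refine Finset.sum_le_sum_of_subset (hm.trans ?_)
              exact Finset.range_subset_range.mpr (by omega)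
          _ = ∑ i ∈ Finset.range N, (2⁻¹ : ℝ≥0∞) ^ (i - N)
              + ∑ i ∈ Finset.range m, (2⁻¹ : ℝ≥0∞) ^ (N + i - N) := Finset.sum_range_add _ _ _
          _ ≤ (N : ℝ≥0∞) + 2 := by
              refine add_le_add ?_ ?_
              · calc ∑ i ∈ Finset.range N, (2⁻¹ : ℝ≥0∞) ^ (i - N)
                    ≤ ∑ _i ∈ Finset.range N, (1:ℝ≥0∞) := by
                      refine Finset.sum_le_sum fun i hi => ?_
                      rw [Nat.sub_eq_zero_of_le (Finset.mem_range.mp hi).le, pow_zero]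
                  _ = (N : ℝ≥0∞) := by simp
              · have h1 : ∀ i : ℕ, N + i - N = i := fun i => by omega
                simp_rw [h1]
                calc ∑ i ∈ Finset.range m, (2⁻¹ : ℝ≥0∞) ^ i
                    ≤ ∑' i : ℕ, (2⁻¹ : ℝ≥0∞) ^ i := ENNReal.sum_le_tsum _
                  _ = 2 := by
                      rw [ENNReal.tsum_geometric, ENNReal.one_sub_inv_two, inv_inv]
    _ = ((N : ℝ≥0∞) + 2) * ENNReal.ofReal (ρ ^ (2:ℕ)) := mul_comm _ _

lemma aux_content_two (M0 : Measure ℝ) {T : ℝ} (hT : 0 < T)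
    (hfin : M0 Set.univ ≠ ⊤)
    (hsupp : M0 (Set.Icc 0 T)ᶜ = 0) (hatom : ∀ x : ℝ, M0 {x} = 0)
    (K : Set ℝ) (hK : K ⊆ Set.Icc 0 T) :
    hContentWith (fun x y => (M0 (Set.Icc (min x y) (max x y))).toReal) 2 K = 0 := by
  refine le_antisymm ?_ (zero_le)
  set L : ℝ := (M0 Set.univ).toReal with hL
  have hL0 : 0 ≤ L := ENNReal.toReal_nonneg
  set C : ℝ := 3 * (L + 1) ^ (2:ℕ) with hC
  have hbound : ∀ N : ℕ, 1 ≤ N →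
      hContentWith (fun x y => (M0 (Set.Icc (min x y) (max x y))).toReal) 2 K
        ≤ ENNReal.ofReal (C / N) := by
    intro N hN
    have hN0 : (0:ℝ) < N := by exact_mod_cast hN
    refine (aux_content_le M0 hT hfin hsupp hatom K hK N hN).trans ?_
    have h1 : ((N : ℝ≥0∞) + 2) = ENNReal.ofReal ((N:ℝ) + 2) := by
      rw [ENNReal.ofReal_add (by positivity) (by norm_num)]
      simp [ENNReal.ofReal_natCast]
    rw [h1, ← ENNReal.ofReal_mul (by positivity)]
    refine ENNReal.ofReal_le_ofReal ?_
    have h2 : ((N:ℝ) + 2) * ((L + 1) / N) ^ (2:ℕ) = ((N:ℝ) + 2) * (L+1)^(2:ℕ) / N^(2:ℕ) := by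
      field_simp
    rw [h2, hC, div_le_div_iff₀ (by positivity) hN0]
    have hN1 : (1:ℝ) ≤ N := by exact_mod_cast hN
    nlinarith [mul_nonneg (mul_nonneg (sq_nonneg (L + 1)) hN0.le) (sub_nonneg.mpr hN1)]
  have htend : Filter.Tendsto (fun N : ℕ => ENNReal.ofReal (C / N)) Filter.atTop (nhds 0) := by
    rw [← ENNReal.ofReal_zero]
    exact ENNReal.tendsto_ofReal (tendsto_const_div_atTop_nhds_zero_nat C)
  refine ge_of_tendsto htend ?_
  filter_upwards [Filter.eventually_ge_atTop 1] with N hN using hbound N hN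
/-- **Frostman-type lower bound in the random metric.**
Let `ω ↦ M ω` be a measurable family of finite atomless Borel measures on `[0,T]`,
inducing pseudometrics `d_ω(x,y) = M_ω([min(x,y), max(x,y)])`, let `K ⊆ [0,T]` be Borel
and `q ∈ (0,1]`. If there is a measurable family `ω ↦ ν ω` of finite Borel measures on
`[0,T]` such that a.s. `ν_ω` is supported by `K` and nonzero, and whose expected
`q`-energy (with respect to `d_ω`) is finite, then `ℙ`-a.s. the Hausdorff dimension of
`K` with respect to `d_ω` is at least `q`. -/
theorem dim_random_metric_ge
    {Ω : Type*} [MeasurableSpace Ω] (ℙ : Measure Ω) [IsProbabilityMeasure ℙ]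
    (T : ℝ) (hT : 0 < T)
    (M : Ω → Measure ℝ)
    (hMfin : ∀ ω, M ω Set.univ < ⊤)
    (hMsupp : ∀ ω, M ω (Set.Icc 0 T)ᶜ = 0)
    (hMatom : ∀ ω, ∀ x : ℝ, M ω {x} = 0)
    (hMmeas : ∀ A : Set ℝ, MeasurableSet A → Measurable fun ω => M ω A)
    (K : Set ℝ) (hK : K ⊆ Set.Icc 0 T) (hKmeas : MeasurableSet K)
    (q : ℝ) (hq : q ∈ Set.Ioc (0 : ℝ) 1)
    (ν : Ω → Measure ℝ)
    (hνfin : ∀ ω, ν ω Set.univ < ⊤)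
    (hνmeas : ∀ A : Set ℝ, MeasurableSet A → Measurable fun ω => ν ω A)
    (hνK : ∀ᵐ ω ∂ℙ, ν ω (Set.Icc 0 T \ K) = 0 ∧ 0 < ν ω (Set.Icc 0 T))
    (henergy :
      ∫⁻ ω, ∫⁻ x in Set.Icc (0 : ℝ) T, ∫⁻ y in Set.Icc (0 : ℝ) T,
          (M ω (Set.Icc (min x y) (max x y))) ^ (-q) ∂(ν ω) ∂(ν ω) ∂ℙ < ⊤) :
    ∀ᵐ ω ∂ℙ,
      q ≤ dimWith (fun x y => (M ω (Set.Icc (min x y) (max x y))).toReal) K := by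
  classical
  have hMfin' : ∀ ω, M ω Set.univ ≠ ⊤ := fun ω => (hMfin ω).ne
  have hνfin' : ∀ ω, ν ω Set.univ ≠ ⊤ := fun ω => (hνfin ω).ne
  have hq0 : 0 < q := hq.1
  -- joint measurability of the distance kernel
  have hDmeas : Measurable fun p : Ω × ℝ × ℝ =>
      M p.1 (Set.Icc (min p.2.1 p.2.2) (max p.2.1 p.2.2)) :=
    aux_D_meas M hMfin' hMatom hMmeas
  -- the inner energy integrand is jointly measurable
  set F : Ω × ℝ → ℝ≥0∞ := fun p =>
    ∫⁻ y in Set.Icc (0:ℝ) T, (M p.1 (Set.Icc (min p.2 y) (max p.2 y))) ^ (-q) ∂(ν p.1)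
    with hFdef
  have hFmeas : Measurable F := by
    refine aux_lintegral_meas (fun p : Ω × ℝ => (ν p.1).restrict (Set.Icc 0 T)) ?_ ?_
      (f := fun r : (Ω × ℝ) × ℝ =>
        (M r.1.1 (Set.Icc (min r.1.2 r.2) (max r.1.2 r.2))) ^ (-q)) ?_
    · intro p
      rw [Measure.restrict_apply MeasurableSet.univ, Set.univ_inter]
      exact ne_top_of_le_ne_top (hνfin' p.1) (measure_mono (Set.subset_univ _))
    · intro A hA
      simp_rw [Measure.restrict_apply hA]
      exact (hνmeas _ (hA.inter measurableSet_Icc)).comp measurable_fst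
    · exact (ENNReal.continuous_rpow_const.measurable).comp
        (hDmeas.comp ((measurable_fst.fst).prodMk
          ((measurable_fst.snd).prodMk measurable_snd)))
  -- the energy is measurable in ω
  set E : Ω → ℝ≥0∞ := fun ω => ∫⁻ x in Set.Icc (0:ℝ) T, F (ω, x) ∂(ν ω) with hEdef
  have hEmeas : Measurable E := by
    refine aux_lintegral_meas (fun ω => (ν ω).restrict (Set.Icc 0 T)) ?_ ?_ hFmeas
    · intro ω
      rw [Measure.restrict_apply MeasurableSet.univ, Set.univ_inter]
      exact ne_top_of_le_ne_top (hνfin' ω) (measure_mono (Set.subset_univ _))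
    · intro A hA
      simp_rw [Measure.restrict_apply hA]
      exact hνmeas _ (hA.inter measurableSet_Icc)
  have hEfin : ∀ᵐ ω ∂ℙ, E ω < ⊤ := ae_lt_top hEmeas henergy.ne
  filter_upwards [hνK, hEfin] with ω hν0 hEfinω
  -- notation for this fixed ω
  set Dm : ℝ → ℝ → ℝ≥0∞ := fun x y => M ω (Set.Icc (min x y) (max x y)) with hDmdef
  have hDmfin : ∀ x y, Dm x y ≠ ⊤ :=
    fun x y => ne_top_of_le_ne_top (hMfin' ω) (measure_mono (Set.subset_univ _))
  have hDmsymm : ∀ x y, Dm x y = Dm y x := fun x y => by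
    show M ω (Set.Icc (min x y) (max x y)) = M ω (Set.Icc (min y x) (max y x))
    rw [min_comm, max_comm]
  have htri : ∀ x z y, Dm x y ≤ Dm x z + Dm z y := by
    intro x z y
    have h1 : Set.Icc (min x y) (max x y) ⊆
        Set.Icc (min x z) (max x z) ∪ Set.Icc (min z y) (max z y) := by
      have := Set.uIcc_subset_uIcc_union_uIcc (a := x) (b := z) (c := y)
      simpa [Set.uIcc] using this
    exact (measure_mono h1).trans (measure_union_le _ _)
  have hanti : ∀ a b : ℝ≥0∞, a ≤ b → b ^ (-q) ≤ a ^ (-q) := by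
    intro a b hab
    rw [ENNReal.rpow_neg, ENNReal.rpow_neg]
    exact ENNReal.inv_le_inv' (ENNReal.rpow_le_rpow hab hq0.le)
  set φ : ℝ → ℝ≥0∞ := fun x => F (ω, x) with hφdef
  have hφmeas : Measurable φ := hFmeas.comp measurable_prodMk_left
  set μr : Measure ℝ := (ν ω).restrict (Set.Icc 0 T) with hμrdef
  set I : ℝ≥0∞ := ν ω (Set.Icc 0 T) with hIdef
  have hI0 : I ≠ 0 := hν0.2.ne'
  have hItop : I ≠ ⊤ := ne_top_of_le_ne_top (hνfin' ω) (measure_mono (Set.subset_univ _))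
  have hμruniv : μr Set.univ = I := by
    rw [hμrdef, Measure.restrict_apply MeasurableSet.univ, Set.univ_inter]
  have hμrtop : ∀ S : Set ℝ, μr S ≠ ⊤ := fun S =>
    ne_top_of_le_ne_top (by rw [hμruniv]; exact hItop) (measure_mono (Set.subset_univ _))
  have hEeq : E ω = ∫⁻ x, φ x ∂μr := rfl
  have hφeq : ∀ x, φ x = ∫⁻ y, (Dm x y) ^ (-q) ∂μr := fun x => rfl
  -- the energy is positive
  have hE0 : E ω ≠ 0 := by
    have hconst : ∀ x y : ℝ, (M ω Set.univ) ^ (-q) ≤ (Dm x y) ^ (-q) :=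
      fun x y => hanti _ _ (measure_mono (Set.subset_univ _))
    have h1 : ∀ x : ℝ, (M ω Set.univ) ^ (-q) * I ≤ φ x := by
      intro x
      rw [hφeq x]
      calc (M ω Set.univ) ^ (-q) * I
          = ∫⁻ _, (M ω Set.univ) ^ (-q) ∂μr := by rw [lintegral_const, hμruniv]
        _ ≤ ∫⁻ y, (Dm x y) ^ (-q) ∂μr := lintegral_mono fun y => hconst x y
    have h2 : (M ω Set.univ) ^ (-q) * I * I ≤ E ω := by
      rw [hEeq]
      calc (M ω Set.univ) ^ (-q) * I * I
          = ∫⁻ _, (M ω Set.univ) ^ (-q) * I ∂μr := by rw [lintegral_const, hμruniv]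
        _ ≤ ∫⁻ x, φ x ∂μr := lintegral_mono h1
    intro hE0'
    rw [hE0'] at h2
    have h3 : (M ω Set.univ) ^ (-q) * I * I = 0 := le_antisymm h2 (zero_le)
    have h4 : (M ω Set.univ) ^ (-q) ≠ 0 := by
      rw [ENNReal.rpow_neg]
      exact ENNReal.inv_ne_zero.mpr (ENNReal.rpow_ne_top_of_nonneg hq0.le (hMfin' ω))
    exact (mul_ne_zero (mul_ne_zero h4 hI0) hI0) h3
  have hEtop : E ω ≠ ⊤ := hEfinω.ne
  -- Markov inequality : choose the level lam
  set lam : ℝ≥0∞ := 2 * E ω / I with hlamdef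
  have hlam0 : lam ≠ 0 :=
    ENNReal.div_ne_zero.mpr ⟨mul_ne_zero two_ne_zero hE0, hItop⟩
  have hlamtop : lam ≠ ⊤ :=
    (ENNReal.div_lt_top (ENNReal.mul_ne_top (by norm_num) hEtop) hI0).ne
  have hMark : μr {x | lam ≤ φ x} ≤ I / 2 := by
    refine (meas_ge_le_lintegral_div hφmeas.aemeasurable hlam0 hlamtop).trans ?_
    rw [← hEeq, ENNReal.div_le_iff hlam0 hlamtop]
    have hcalc : I / 2 * lam = E ω := by
      rw [hlamdef, div_eq_mul_inv, div_eq_mul_inv]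
      calc I * 2⁻¹ * (2 * E ω * I⁻¹) = (I * I⁻¹) * (2⁻¹ * 2) * E ω := by ring
        _ = E ω := by
            rw [ENNReal.mul_inv_cancel hI0 hItop,
              ENNReal.inv_mul_cancel two_ne_zero (by norm_num), one_mul, one_mul]
    rw [hcalc]
  set B : Set ℝ := {x | φ x < lam} with hBdef
  have hBmeas : MeasurableSet B := measurableSet_lt hφmeas measurable_const
  have haI : I ≤ μr B + I / 2 := by
    calc I = μr Set.univ := hμruniv.symm
      _ = μr (B ∪ Bᶜ) := by rw [Set.union_compl_self]
      _ ≤ μr B + μr Bᶜ := measure_union_le _ _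
      _ ≤ μr B + I / 2 := by
          refine add_le_add_right (le_trans (le_of_eq ?_) hMark) _
          congr 1
          ext x
          simp [hBdef, not_lt]
  have ha0 : μr B ≠ 0 := by
    intro h
    rw [h, zero_add] at haI
    exact absurd haI (not_le.mpr (ENNReal.half_lt_self hI0 hItop))
  have hatop : μr B ≠ ⊤ := hμrtop B
  -- now prove the dimension bound
  refine le_csInf ⟨2, by norm_num,
    aux_content_two (M ω) hT (hMfin' ω) (hMsupp ω) (hMatom ω) K hK⟩ ?_
  rintro b ⟨hb0, hbC⟩
  by_contra hqb
  push_neg at hqb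
  set cst : ℝ≥0∞ := lam * ENNReal.ofReal ((2:ℝ) ^ q) with hcstdef
  have hcst0 : cst ≠ 0 :=
    mul_ne_zero hlam0 (ENNReal.ofReal_pos.mpr (Real.rpow_pos_of_pos two_pos q)).ne'
  have hcsttop : cst ≠ ⊤ := ENNReal.mul_ne_top hlamtop ENNReal.ofReal_ne_top
  set δ : ℝ≥0∞ := min 1 (μr B / (2 * cst)) with hδdef
  have hδ0 : 0 < δ :=
    lt_min one_pos (ENNReal.div_pos ha0 (ENNReal.mul_ne_top (by norm_num) hcsttop))
  have hlt : hContentWith (fun x y => (M ω (Set.Icc (min x y) (max x y))).toReal) b K < δ := by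
    rw [hbC]; exact hδ0
  rw [hContentWith, iInf_lt_iff] at hlt
  obtain ⟨cc, hlt⟩ := hlt
  rw [iInf_lt_iff] at hlt
  obtain ⟨r, hlt⟩ := hlt
  rw [iInf_lt_iff] at hlt
  obtain ⟨⟨hrpos, hcov⟩, hsum⟩ := hlt
  -- each radius is < 1
  have hr1 : ∀ n, r n < 1 := by
    intro n
    have h1 : ENNReal.ofReal (r n ^ b) < 1 :=
      lt_of_le_of_lt (ENNReal.le_tsum n) (hsum.trans_le (min_le_left _ _))
    rw [ENNReal.ofReal_lt_one] at h1
    rcases (Real.rpow_lt_one_iff (hrpos n).le).mp h1 with ⟨h, _⟩ | ⟨_, h2⟩ | ⟨h, _⟩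
    · exact absurd h (hrpos n).ne'
    · linarith
    · exact h
  set Ball : ℕ → Set ℝ := fun n =>
    {y | (M ω (Set.Icc (min (cc n) y) (max (cc n) y))).toReal < r n} with hBalldef
  have hBallmeas : ∀ n, MeasurableSet (Ball n) := by
    intro n
    have h1 : Measurable fun y : ℝ => (Dm (cc n) y).toReal :=
      (ENNReal.measurable_toReal).comp
        (hDmeas.comp (measurable_const.prodMk (measurable_const.prodMk measurable_id)))
    exact measurableSet_lt h1 measurable_const
  -- the key Frostman estimate for a single ball
  have hkey : ∀ n, μr (B ∩ Ball n) ≤ lam * ENNReal.ofReal ((2 * r n) ^ q) := by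
    intro n
    rcases Set.eq_empty_or_nonempty (B ∩ Ball n) with he | ⟨x, hxB, hxBall⟩
    · rw [he, measure_empty]; exact zero_le
    · set ρe : ℝ≥0∞ := ENNReal.ofReal (2 * r n) with hρedef
      have hρe0 : ρe ≠ 0 := (ENNReal.ofReal_pos.mpr (by linarith [hrpos n])).ne'
      have hρetop : ρe ≠ ⊤ := ENNReal.ofReal_ne_top
      have hρ : ∀ y ∈ Ball n, Dm x y ≤ ρe := by
        intro y hy
        have h1 : Dm x (cc n) < ENNReal.ofReal (r n) := by
          rw [hDmsymm]
          exact (ENNReal.lt_ofReal_iff_toReal_lt (hDmfin _ _)).mpr hxBall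
        have h2 : Dm (cc n) y < ENNReal.ofReal (r n) :=
          (ENNReal.lt_ofReal_iff_toReal_lt (hDmfin _ _)).mpr hy
        calc Dm x y ≤ Dm x (cc n) + Dm (cc n) y := htri x (cc n) y
          _ ≤ ENNReal.ofReal (r n) + ENNReal.ofReal (r n) := add_le_add h1.le h2.le
          _ = ρe := by rw [hρedef, ← ENNReal.ofReal_add (hrpos n).le (hrpos n).le]; ring_nf
      have hφx : ρe ^ (-q) * μr (Ball n) ≤ φ x := by
        rw [hφeq x, ← lintegral_indicator_const (hBallmeas n)]
        refine lintegral_mono fun y => ?_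
        by_cases hy : y ∈ Ball n
        · rw [Set.indicator_of_mem hy]
          exact hanti _ _ (hρ y hy)
        · rw [Set.indicator_of_notMem hy]
          exact zero_le
      have hρq0 : ρe ^ q ≠ 0 :=
        (ENNReal.rpow_pos (lt_of_le_of_ne (zero_le) (Ne.symm hρe0)) hρetop).ne'
      have hρqtop : ρe ^ q ≠ ⊤ := ENNReal.rpow_ne_top_of_nonneg hq0.le hρetop
      have h3 : (ρe ^ q)⁻¹ * μr (Ball n) ≤ lam := by
        rw [← ENNReal.rpow_neg]
        exact hφx.trans hxB.le
      have h4 : μr (Ball n) ≤ lam * ρe ^ q := by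
        have h5 := mul_le_mul_left h3 (ρe ^ q)
        have h6 : (ρe ^ q)⁻¹ * μr (Ball n) * ρe ^ q
            = ((ρe ^ q)⁻¹ * ρe ^ q) * μr (Ball n) := by ring
        rw [h6, ENNReal.inv_mul_cancel hρq0 hρqtop, one_mul] at h5
        exact h5
      calc μr (B ∩ Ball n) ≤ μr (Ball n) := measure_mono Set.inter_subset_right
        _ ≤ lam * ρe ^ q := h4
        _ = lam * ENNReal.ofReal ((2 * r n) ^ q) := by
            rw [hρedef, ENNReal.ofReal_rpow_of_pos (by linarith [hrpos n])]
  -- putting things together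
  have hcover : μr B ≤ ∑' n, μr (B ∩ Ball n) := by
    have hKc : μr Kᶜ = 0 := by
      rw [hμrdef, Measure.restrict_apply hKmeas.compl]
      rw [Set.inter_comm, ← Set.diff_eq]
      exact hν0.1
    have hsub : B ⊆ (B ∩ K) ∪ Kᶜ := by
      intro x hx
      by_cases hxK : x ∈ K
      · exact Or.inl ⟨hx, hxK⟩
      · exact Or.inr hxK
    have hsub2 : B ∩ K ⊆ ⋃ n, (B ∩ Ball n) := by
      intro x hx
      obtain ⟨n, hn⟩ := Set.mem_iUnion.mp (hcov hx.2)
      exact Set.mem_iUnion.mpr ⟨n, hx.1, hn⟩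
    calc μr B ≤ μr ((B ∩ K) ∪ Kᶜ) := measure_mono hsub
      _ ≤ μr (B ∩ K) + μr Kᶜ := measure_union_le _ _
      _ = μr (B ∩ K) := by rw [hKc, add_zero]
      _ ≤ μr (⋃ n, (B ∩ Ball n)) := measure_mono hsub2
      _ ≤ ∑' n, μr (B ∩ Ball n) := measure_iUnion_le _
  have hfinal : μr B ≤ cst * δ := by
    calc μr B ≤ ∑' n, μr (B ∩ Ball n) := hcover
      _ ≤ ∑' n, lam * ENNReal.ofReal ((2 * r n) ^ q) := ENNReal.tsum_le_tsum hkey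
      _ = lam * ∑' n, ENNReal.ofReal ((2 * r n) ^ q) := ENNReal.tsum_mul_left
      _ = cst * ∑' n, ENNReal.ofReal (r n ^ q) := by
          rw [hcstdef]
          have : ∀ n, ENNReal.ofReal ((2 * r n) ^ q)
              = ENNReal.ofReal ((2:ℝ) ^ q) * ENNReal.ofReal (r n ^ q) := by
            intro n
            rw [Real.mul_rpow (by norm_num) (hrpos n).le,
              ENNReal.ofReal_mul (Real.rpow_nonneg (by norm_num) q)]
          simp_rw [this]
          rw [ENNReal.tsum_mul_left, mul_assoc]
      _ ≤ cst * ∑' n, ENNReal.ofReal (r n ^ b) := by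
          refine mul_le_mul_right (ENNReal.tsum_le_tsum fun n => ?_) _
          exact ENNReal.ofReal_le_ofReal
            (Real.rpow_le_rpow_of_exponent_ge (hrpos n) (hr1 n).le hqb.le)
      _ ≤ cst * δ := mul_le_mul_right hsum.le _
  have hhalf : cst * δ ≤ μr B / 2 := by
    calc cst * δ ≤ cst * (μr B / (2 * cst)) := mul_le_mul_right (min_le_right _ _) _
      _ = μr B / 2 := by
          rw [div_eq_mul_inv, div_eq_mul_inv,
            ENNReal.mul_inv (Or.inl two_ne_zero) (Or.inl (by norm_num))]
          calc cst * (μr B * (2⁻¹ * cst⁻¹)) = (cst * cst⁻¹) * (μr B * 2⁻¹) := by ring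
            _ = μr B * 2⁻¹ := by rw [ENNReal.mul_inv_cancel hcst0 hcsttop, one_mul]
  exact absurd (hfinal.trans hhalf)
    (not_le.mpr (ENNReal.half_lt_self ha0 hatop))
end

section
/- Let (Ω, ℱ, ℙ) be a probability space, R > 0, and ω ↦ M_ω a measurable family of finite Borel measures on ℝ². Let q ∈ (0,1], s > 0 and C > 0 be such that ∫_Ω M_ω(B(x,r))^q ℙ(dω) ≤ C r^s for every x ∈ B(0,R) and every 0 < r ≤ R, where B(x,r) denotes the Euclidean ball. If K ⊆ B(0,R) has Euclidean Hausdorff dimension strictly less than s, then ℙ-almost surely, for every ε > 0 there is a countable cover of K by balls B(x_i, r_i) with x_i ∈ B(0,R), 0 < r_i ≤ R, such that ∑_i M_ω(B(x_i,r_i))^q ≤ ε; in particular the M_ω-Hausdorff dimension of K is at most q almost surely. -/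
open MeasureTheory Metric
open scoped ENNReal

private lemma real_add_rpow_le (s a b : ℝ) (hs : 0 < s) (ha : 0 ≤ a) (hb : 0 ≤ b) :
    (a + b) ^ s ≤ 2 ^ s * (a ^ s + b ^ s) := by
  have h1 : a + b ≤ 2 * max a b := by
    rcases le_total a b with h | h
    · simp [max_eq_right h]; nlinarith
    · simp [max_eq_left h]; nlinarith
  have h2 : (a + b) ^ s ≤ (2 * max a b) ^ s :=
    Real.rpow_le_rpow (by positivity) h1 hs.le
  have h3 : (2 * max a b) ^ s = 2 ^ s * (max a b) ^ s :=
    Real.mul_rpow (by norm_num) (le_max_of_le_left ha)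
  have h4 : (max a b) ^ s ≤ a ^ s + b ^ s := by
    rcases le_total a b with h | h
    · rw [max_eq_right h]; nlinarith [Real.rpow_nonneg ha s]
    · rw [max_eq_left h]; nlinarith [Real.rpow_nonneg hb s]
  calc (a + b) ^ s ≤ 2 ^ s * (max a b) ^ s := by rw [← h3]; exact h2
    _ ≤ 2 ^ s * (a ^ s + b ^ s) := by
        have : (0:ℝ) ≤ 2 ^ s := Real.rpow_nonneg (by norm_num) s
        nlinarith

private lemma cover_lemma_s9 (R s : ℝ) (hR : 0 < R) (hs : 0 < s)
    (K : Set (EuclideanSpace ℝ (Fin 2))) (hK : K ⊆ Metric.ball 0 R)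
    (hdim : dimH K < ENNReal.ofReal s) :
    ∀ δ : ℝ, 0 < δ → ∃ (x : ℕ → EuclideanSpace ℝ (Fin 2)) (r : ℕ → ℝ),
      (∀ n, x n ∈ Metric.ball (0 : EuclideanSpace ℝ (Fin 2)) R) ∧
      (∀ n, 0 < r n ∧ r n ≤ R) ∧
      K ⊆ ⋃ n, Metric.ball (x n) (r n) ∧
      ∑' n, ENNReal.ofReal (r n ^ s) ≤ ENNReal.ofReal δ := by
  intro δ hδ
  -- Hausdorff measure at dimension s vanishes
  have hμ : μH[s] K = 0 := by
    have : dimH K < (s.toNNReal : ℝ≥0∞) := by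
      rwa [← ENNReal.ofReal] 
    have h0 := hausdorffMeasure_of_dimH_lt this
    rwa [Real.coe_toNNReal s hs.le] at h0
  set a : ℝ := 2 ^ s with ha_def
  have ha : 0 < a := Real.rpow_pos_of_pos (by norm_num) s
  set δ' : ℝ := δ / (2 * a) with hδ'_def
  have hδ' : 0 < δ' := by positivity
  set δ₂ : ℝ := min δ' ((R/2) ^ s) with hδ₂_def
  have hδ₂ : 0 < δ₂ := lt_min hδ' (Real.rpow_pos_of_pos (by linarith) s)
  -- extract a cover with small diameters and small s-sum
  have hinf : (⨅ (t : ℕ → Set (EuclideanSpace ℝ (Fin 2))) (_ : K ⊆ ⋃ n, t n)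
      (_ : ∀ n, EMetric.diam (t n) ≤ ENNReal.ofReal (R/2)),
      ∑' n, ⨆ _ : (t n).Nonempty, EMetric.diam (t n) ^ s) = 0 := by
    refine le_antisymm ?_ bot_le
    rw [← hμ, Measure.hausdorffMeasure_apply]
    exact le_iSup₂ (f := fun r (_ : 0 < r) =>
      ⨅ (t : ℕ → Set (EuclideanSpace ℝ (Fin 2))) (_ : K ⊆ ⋃ n, t n)
        (_ : ∀ n, EMetric.diam (t n) ≤ r),
        ∑' n, ⨆ _ : (t n).Nonempty, EMetric.diam (t n) ^ s)
      (ENNReal.ofReal (R/2)) (by simp [ENNReal.ofReal_pos]; linarith)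
  have hlt : (⨅ (t : ℕ → Set (EuclideanSpace ℝ (Fin 2))) (_ : K ⊆ ⋃ n, t n)
      (_ : ∀ n, EMetric.diam (t n) ≤ ENNReal.ofReal (R/2)),
      ∑' n, ⨆ _ : (t n).Nonempty, EMetric.diam (t n) ^ s) < ENNReal.ofReal δ' := by
    rw [hinf]; simp [ENNReal.ofReal_pos, hδ']
  simp only [iInf_lt_iff] at hlt
  obtain ⟨t, htK, htdiam, htsum⟩ := hlt
  -- the correction radii
  set η : ℕ → ℝ := fun n => (δ₂ / 2 * (1/2) ^ n) ^ (1/s) with hη_def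
  have hηpos : ∀ n, 0 < η n := fun n => Real.rpow_pos_of_pos (by positivity) _
  have hηpow : ∀ n, η n ^ s = δ₂ / 2 * (1/2) ^ n := by
    intro n
    rw [hη_def, ← Real.rpow_natCast ((1:ℝ)/2) n]
    rw [← Real.rpow_mul (by positivity), one_div_mul_cancel hs.ne', Real.rpow_one, Real.rpow_natCast]
  have hηle : ∀ n, η n ≤ R / 2 := by
    intro n
    have h1 : η n ^ s ≤ (R/2) ^ s := by
      rw [hηpow]
      calc δ₂ / 2 * (1/2) ^ n ≤ δ₂ * 1 := by
            have h2 : ((1:ℝ)/2) ^ n ≤ 1 := pow_le_one₀ (by norm_num) (by norm_num)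
            nlinarith [pow_pos (show (0:ℝ) < 1/2 by norm_num) n]
        _ = δ₂ := mul_one _
        _ ≤ (R/2) ^ s := min_le_right _ _
    exact (Real.rpow_le_rpow_iff (hηpos n).le (by linarith) hs).mp h1
  have htfin : ∀ n, EMetric.diam (t n) ≠ ∞ := fun n =>
    ne_top_of_le_ne_top ENNReal.ofReal_ne_top (htdiam n)
  set d : ℕ → ℝ := fun n => (EMetric.diam (t n)).toReal with hd_def
  have hd0 : ∀ n, 0 ≤ d n := fun n => ENNReal.toReal_nonneg
  have hdle : ∀ n, d n ≤ R / 2 := by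
    intro n
    have := ENNReal.toReal_mono ENNReal.ofReal_ne_top (htdiam n)
    rwa [ENNReal.toReal_ofReal (by linarith)] at this
  classical
  -- centers and radii
  refine ⟨fun n => if h : (K ∩ t n).Nonempty then h.choose else 0,
    fun n => if (K ∩ t n).Nonempty then d n + η n else η n, ?_, ?_, ?_, ?_⟩
  · intro n
    by_cases h : (K ∩ t n).Nonempty
    · simp only [dif_pos h]; exact hK h.choose_spec.1
    · simp only [dif_neg h]; exact mem_ball_self hR
  · intro n
    by_cases h : (K ∩ t n).Nonempty
    · simp only [if_pos h]
      exact ⟨by positivity, by have := hdle n; have := hηle n; linarith⟩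
    · simp only [if_neg h]
      exact ⟨hηpos n, by have := hηle n; linarith⟩
  · intro z hz
    obtain ⟨n, hn⟩ := Set.mem_iUnion.mp (htK hz)
    have h : (K ∩ t n).Nonempty := ⟨z, hz, hn⟩
    refine Set.mem_iUnion.mpr ⟨n, ?_⟩
    simp only [mem_ball, dif_pos h, if_pos h]
    have hxz : dist z h.choose ≤ d n := by
      rw [dist_edist]
      exact ENNReal.toReal_mono (htfin n)
        (EMetric.edist_le_diam_of_mem hn h.choose_spec.2)
    have := hηpos n
    linarith
  · -- the sum bound
    have key : ∀ n, ENNReal.ofReal ((if (K ∩ t n).Nonempty then d n + η n else η n) ^ s)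
        ≤ ENNReal.ofReal a * ((⨆ _ : (t n).Nonempty, EMetric.diam (t n) ^ s)
            + ENNReal.ofReal (η n ^ s)) := by
      intro n
      have hstep : ENNReal.ofReal ((d n + η n) ^ s)
          ≤ ENNReal.ofReal a * (ENNReal.ofReal (d n ^ s) + ENNReal.ofReal (η n ^ s)) := by
        rw [← ENNReal.ofReal_add (by positivity) (by positivity),
          ← ENNReal.ofReal_mul ha.le]
        exact ENNReal.ofReal_le_ofReal
          (real_add_rpow_le s (d n) (η n) hs (hd0 n) (hηpos n).le)
      have hdpow : ENNReal.ofReal (d n ^ s)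
          ≤ ⨆ _ : (t n).Nonempty, EMetric.diam (t n) ^ s := by
        by_cases ht : (t n).Nonempty
        · rw [ciSup_pos ht, hd_def]
          rw [ENNReal.toReal_rpow]
          rw [ENNReal.ofReal_toReal (ENNReal.rpow_lt_top_of_nonneg hs.le (htfin n)).ne]
        · have : d n = 0 := by
            simp [hd_def, Set.not_nonempty_iff_eq_empty.mp ht]
            exact congrArg ENNReal.toReal EMetric.diam_empty
          rw [this, Real.zero_rpow hs.ne']
          simp
      calc ENNReal.ofReal ((if (K ∩ t n).Nonempty then d n + η n else η n) ^ s)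
          ≤ ENNReal.ofReal ((d n + η n) ^ s) := by
            split_ifs with h
            · exact le_rfl
            · exact ENNReal.ofReal_le_ofReal
                (Real.rpow_le_rpow (hηpos n).le (by linarith [hd0 n]) hs.le)
        _ ≤ ENNReal.ofReal a * (ENNReal.ofReal (d n ^ s) + ENNReal.ofReal (η n ^ s)) :=
            hstep
        _ ≤ _ := by
            gcongr
    have hηsum : ∑' n, ENNReal.ofReal (η n ^ s) = ENNReal.ofReal δ₂ := by
      have hsummable : Summable (fun n : ℕ => δ₂ / 2 * (1/2) ^ n) :=
        (summable_geometric_of_lt_one (by norm_num) (by norm_num)).mul_left _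
      calc ∑' n, ENNReal.ofReal (η n ^ s)
          = ∑' n, ENNReal.ofReal (δ₂ / 2 * (1/2) ^ n) := by
            congr 1; ext n; rw [hηpow]
        _ = ENNReal.ofReal (∑' n : ℕ, δ₂ / 2 * (1/2) ^ n) :=
            (ENNReal.ofReal_tsum_of_nonneg (fun n => by positivity) hsummable).symm
        _ = ENNReal.ofReal δ₂ := by
            rw [tsum_mul_left, tsum_geometric_of_lt_one (by norm_num) (by norm_num)]
            norm_num
    calc ∑' n, ENNReal.ofReal ((if (K ∩ t n).Nonempty then d n + η n else η n) ^ s)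
        ≤ ∑' n, ENNReal.ofReal a * ((⨆ _ : (t n).Nonempty, EMetric.diam (t n) ^ s)
            + ENNReal.ofReal (η n ^ s)) := ENNReal.tsum_le_tsum key
      _ = ENNReal.ofReal a * ((∑' n, ⨆ _ : (t n).Nonempty, EMetric.diam (t n) ^ s)
            + ∑' n, ENNReal.ofReal (η n ^ s)) := by
          rw [ENNReal.tsum_mul_left, ENNReal.tsum_add]
      _ ≤ ENNReal.ofReal a * (ENNReal.ofReal δ' + ENNReal.ofReal δ₂) := by
          rw [hηsum]
          gcongr
      _ ≤ ENNReal.ofReal a * (ENNReal.ofReal δ' + ENNReal.ofReal δ') := by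
          gcongr
          exact min_le_left _ _
      _ = ENNReal.ofReal δ := by
          rw [← ENNReal.ofReal_add hδ'.le hδ'.le, ← ENNReal.ofReal_mul ha.le]
          congr 1
          rw [hδ'_def]
          field_simp
          ring


/-- The generalized `t`-dimensional Hausdorff content of `K` with respect to a Borel
measure `m` on `ℝ²`: the infimum of `∑ᵢ m(B(xᵢ,rᵢ))^t` over countable covers of `K` by
Euclidean balls `B(xᵢ,rᵢ)` of radii `rᵢ > 0`. -/
noncomputable def mContent (m : Measure (EuclideanSpace ℝ (Fin 2))) (t : ℝ)
    (K : Set (EuclideanSpace ℝ (Fin 2))) : ℝ≥0∞ :=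
  ⨅ (c : ℕ → EuclideanSpace ℝ (Fin 2)) (r : ℕ → ℝ)
    (_ : (∀ n, 0 < r n) ∧ K ⊆ ⋃ n, Metric.ball (c n) (r n)),
    ∑' n, (m (Metric.ball (c n) (r n))) ^ t

/-- The Hausdorff dimension of `K` with respect to the measure `m`:
`inf {t ≥ 0 : C^t_m(K) = 0}`. -/
noncomputable def mDim (m : Measure (EuclideanSpace ℝ (Fin 2)))
    (K : Set (EuclideanSpace ℝ (Fin 2))) : ℝ :=
  sInf {t : ℝ | 0 ≤ t ∧ mContent m t K = 0}

/-- **Upper half of the two-dimensional KPZ relation (abstract form).**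
Let `ω ↦ M ω` be a measurable family of finite Borel measures on `ℝ²` on a probability
space `(Ω, ℙ)` with `E[M(B(x,r))^q] ≤ C r^s` for all `x ∈ B(0,R)` and `0 < r ≤ R`, where
`q ∈ (0,1]`, `s > 0`, `C > 0`. If `K ⊆ B(0,R)` has Euclidean Hausdorff dimension `< s`,
then `ℙ`-a.s., for every `ε > 0` there is a countable cover of `K` by balls `B(xᵢ,rᵢ)`
with `xᵢ ∈ B(0,R)` and `0 < rᵢ ≤ R` such that `∑ᵢ M_ω(B(xᵢ,rᵢ))^q ≤ ε`; in particular
the `M_ω`-Hausdorff dimension of `K` is at most `q` almost surely. -/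
theorem mdim_le_of_moment_bound
    {Ω : Type*} [MeasurableSpace Ω] (ℙ : Measure Ω) [IsProbabilityMeasure ℙ]
    (R : ℝ) (hR : 0 < R)
    (M : Ω → Measure (EuclideanSpace ℝ (Fin 2)))
    (hfin : ∀ ω, M ω Set.univ < ⊤)
    (hmeas : ∀ A : Set (EuclideanSpace ℝ (Fin 2)), MeasurableSet A →
      Measurable fun ω => M ω A)
    (q s C : ℝ) (hq : q ∈ Set.Ioc (0 : ℝ) 1) (hs : 0 < s) (hC : 0 < C)
    (hmom : ∀ x ∈ Metric.ball (0 : EuclideanSpace ℝ (Fin 2)) R, ∀ r : ℝ, 0 < r → r ≤ R →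
      ∫⁻ ω, (M ω (Metric.ball x r)) ^ q ∂ℙ ≤ ENNReal.ofReal (C * r ^ s))
    (K : Set (EuclideanSpace ℝ (Fin 2)))
    (hK : K ⊆ Metric.ball 0 R) (hdim : dimH K < ENNReal.ofReal s) :
    ∀ᵐ ω ∂ℙ,
      (∀ ε : ℝ, 0 < ε → ∃ (x : ℕ → EuclideanSpace ℝ (Fin 2)) (r : ℕ → ℝ),
        (∀ n, x n ∈ Metric.ball (0 : EuclideanSpace ℝ (Fin 2)) R) ∧
        (∀ n, 0 < r n ∧ r n ≤ R) ∧
        K ⊆ ⋃ n, Metric.ball (x n) (r n) ∧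
        ∑' n, (M ω (Metric.ball (x n) (r n))) ^ q ≤ ENNReal.ofReal ε) ∧
      mDim (M ω) K ≤ q := by
  classical
  have hcov : ∀ k : ℕ, ∃ (x : ℕ → EuclideanSpace ℝ (Fin 2)) (r : ℕ → ℝ),
      (∀ n, x n ∈ Metric.ball (0 : EuclideanSpace ℝ (Fin 2)) R) ∧
      (∀ n, 0 < r n ∧ r n ≤ R) ∧
      K ⊆ ⋃ n, Metric.ball (x n) (r n) ∧
      ∑' n, ENNReal.ofReal (r n ^ s) ≤ ENNReal.ofReal ((1/2) ^ k / C) := fun k =>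
    cover_lemma_s9 R s hR hs K hK hdim ((1/2) ^ k / C) (by positivity)
  choose x r hx hr hKcov hsum using hcov
  have hmble : ∀ k n, Measurable fun ω => (M ω (Metric.ball (x k n) (r k n))) ^ q :=
    fun k n => (hmeas _ measurableSet_ball).pow_const q
  set Y : ℕ → Ω → ℝ≥0∞ := fun k ω => ∑' n, (M ω (Metric.ball (x k n) (r k n))) ^ q
    with hY
  have hYm : ∀ k, Measurable (Y k) := fun k => Measurable.ennreal_tsum (fun n => hmble k n)
  have hYint : ∀ k, ∫⁻ ω, Y k ω ∂ℙ ≤ ENNReal.ofReal ((1/2) ^ k) := by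
    intro k
    rw [hY]
    simp only
    rw [lintegral_tsum (fun n => (hmble k n).aemeasurable)]
    calc ∑' n, ∫⁻ ω, (M ω (Metric.ball (x k n) (r k n))) ^ q ∂ℙ
        ≤ ∑' n, ENNReal.ofReal (C * r k n ^ s) :=
          ENNReal.tsum_le_tsum fun n => hmom (x k n) (hx k n) (r k n) (hr k n).1 (hr k n).2
      _ = ENNReal.ofReal C * ∑' n, ENNReal.ofReal (r k n ^ s) := by
          simp_rw [ENNReal.ofReal_mul hC.le]; rw [ENNReal.tsum_mul_left]
      _ ≤ ENNReal.ofReal C * ENNReal.ofReal ((1/2) ^ k / C) := by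
          gcongr; exact hsum k
      _ = ENNReal.ofReal ((1/2) ^ k) := by
          rw [← ENNReal.ofReal_mul hC.le]; congr 1; field_simp
  have htot : ∫⁻ ω, ∑' k, Y k ω ∂ℙ < ∞ := by
    rw [lintegral_tsum (fun k => (hYm k).aemeasurable)]
    calc ∑' k, ∫⁻ ω, Y k ω ∂ℙ ≤ ∑' k : ℕ, ENNReal.ofReal ((1/2) ^ k) :=
          ENNReal.tsum_le_tsum hYint
      _ = ENNReal.ofReal 2 := by
          rw [← ENNReal.ofReal_tsum_of_nonneg (fun n => by positivity)
            (summable_geometric_of_lt_one (by norm_num) (by norm_num)),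
            tsum_geometric_of_lt_one (by norm_num) (by norm_num)]
          norm_num
      _ < ∞ := ENNReal.ofReal_lt_top
  have hae : ∀ᵐ ω ∂ℙ, ∑' k, Y k ω < ∞ :=
    ae_lt_top (Measurable.ennreal_tsum hYm) htot.ne
  filter_upwards [hae] with ω hω
  have hmain : ∀ ε : ℝ, 0 < ε → ∃ k, Y k ω ≤ ENNReal.ofReal ε := by
    intro ε hε
    by_contra hcon
    push_neg at hcon
    have hle : (∑' _ : ℕ, ENNReal.ofReal ε) ≤ ∑' k, Y k ω :=
      ENNReal.tsum_le_tsum fun k => (hcon k).le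
    rw [ENNReal.tsum_const_eq_top_of_ne_zero (ENNReal.ofReal_pos.mpr hε).ne'] at hle
    exact hω.ne (top_le_iff.mp hle)
  constructor
  · intro ε hε
    obtain ⟨k, hk⟩ := hmain ε hε
    exact ⟨x k, r k, hx k, hr k, hKcov k, hk⟩
  · have hcont : mContent (M ω) q K ≤ 0 := by
      have htend : Filter.Tendsto (fun j : ℕ => ENNReal.ofReal ((1/2 : ℝ) ^ j))
          Filter.atTop (nhds 0) := by
        rw [← ENNReal.ofReal_zero]
        exact ENNReal.tendsto_ofReal
          (tendsto_pow_atTop_nhds_zero_of_lt_one (by norm_num) (by norm_num))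
      refine ge_of_tendsto' htend fun j => ?_
      obtain ⟨k, hk⟩ := hmain ((1/2) ^ j) (by positivity)
      calc mContent (M ω) q K ≤ Y k ω := by
            refine iInf_le_of_le (x k) (iInf_le_of_le (r k) ?_)
            exact iInf_le _ ⟨fun n => (hr k n).1, hKcov k⟩
        _ ≤ _ := hk
    have hzero : mContent (M ω) q K = 0 := le_antisymm hcont bot_le
    exact csInf_le ⟨0, fun t ht => ht.1⟩ ⟨hq.1.le, hzero⟩
end
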